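/- arXiv:1206.2485 — 10 statements merged into one kernel-verified Lean document; each statement's English description precedes it below -/
import Mathlib

section
/- Let Ω be a Polish space with Borel σ-field B, and let μ_n (n ∈ ℕ) and μ be probability measures on the product space Ω × Ω (with the product σ-field B ⊗ B). Assume that for every n the marginals of μ_n coincide with those of μ, i.e. μ_n(A × Ω) = μ(A × Ω) and μ_n(Ω × A) = μ(Ω × A) for every A ∈ B. Then μ_n converges weakly to μ if and only if μ_n(A × B) → μ(A × B) for all A, B ∈ B. -/
open MeasureTheory Filter Topology Set

open scoped ENNReal NNReal

section auxlemmas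

variable {X : Type*} [MeasurableSpace X]

private lemma measure_union_toReal (m : Measure (X × X)) [IsFiniteMeasure m]
    {s t : Set (X × X)} (ht : MeasurableSet t) :
    (m (s ∪ t)).toReal = (m s).toReal + (m t).toReal - (m (s ∩ t)).toReal := by
  have h := measure_union_add_inter (μ := m) s ht
  have h' : (m (s ∪ t)).toReal + (m (s ∩ t)).toReal = (m s).toReal + (m t).toReal := by
    rw [← ENNReal.toReal_add (measure_ne_top _ _) (measure_ne_top _ _),
        ← ENNReal.toReal_add (measure_ne_top _ _) (measure_ne_top _ _), h]
  linarith

/-- Convergence on all measurable rectangles implies convergence on all finite unions of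
measurable rectangles. -/
private lemma tendsto_finset_union
    (μ : ℕ → Measure (X × X)) (ν : Measure (X × X))
    [∀ n, IsFiniteMeasure (μ n)] [IsFiniteMeasure ν]
    (hrect : ∀ A B : Set X, MeasurableSet A → MeasurableSet B →
      Tendsto (fun n => ((μ n) (A ×ˢ B)).toReal) atTop (𝓝 ((ν (A ×ˢ B)).toReal)))
    {ι : Type*} [DecidableEq ι] (s : Finset ι) :
    ∀ (U V : ι → Set X), (∀ i, MeasurableSet (U i)) → (∀ i, MeasurableSet (V i)) →
      Tendsto (fun n => ((μ n) (⋃ i ∈ s, U i ×ˢ V i)).toReal) atTop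
        (𝓝 ((ν (⋃ i ∈ s, U i ×ˢ V i)).toReal)) := by
  induction s using Finset.induction_on with
  | empty =>
    intro U V _ _
    simp only [Finset.notMem_empty, iUnion_of_empty, iUnion_empty, measure_empty,
      ENNReal.toReal_zero]
    exact tendsto_const_nhds
  | @insert a s ha ih =>
    intro U V hU hV
    have hXm : MeasurableSet (⋃ i ∈ s, U i ×ˢ V i) :=
      s.measurableSet_biUnion (fun i _ => (hU i).prod (hV i))
    have hinter : (U a ×ˢ V a) ∩ ⋃ i ∈ s, U i ×ˢ V i
        = ⋃ i ∈ s, (U a ∩ U i) ×ˢ (V a ∩ V i) := by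
      rw [inter_iUnion₂]
      refine iUnion₂_congr fun i _ => ?_
      rw [prod_inter_prod]
    have hset : (⋃ i ∈ insert a s, U i ×ˢ V i) = (U a ×ˢ V a) ∪ ⋃ i ∈ s, U i ×ˢ V i :=
      Finset.set_biUnion_insert a s _
    have key : ∀ (m : Measure (X × X)) [IsFiniteMeasure m],
        (m (⋃ i ∈ insert a s, U i ×ˢ V i)).toReal
          = (m (U a ×ˢ V a)).toReal + (m (⋃ i ∈ s, U i ×ˢ V i)).toReal
            - (m ((U a ×ˢ V a) ∩ ⋃ i ∈ s, U i ×ˢ V i)).toReal := by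
      intro m _
      rw [hset]
      exact measure_union_toReal m hXm
    have h1 := hrect _ _ (hU a) (hV a)
    have h2 := ih U V hU hV
    have h3 := ih (fun i => U a ∩ U i) (fun i => V a ∩ V i)
      (fun i => (hU a).inter (hU i)) (fun i => (hV a).inter (hV i))
    rw [← hinter] at h3
    simp only [key]
    exact (h1.add h2).sub h3

end auxlemmas

/-- Let `Ω` be a Polish space with Borel σ-field, and let `μ n` (`n ∈ ℕ`)
and `ν` be probability measures on `Ω × Ω` (product σ-field). If for every `n` the marginals
of `μ n` coincide with those of `ν`, then `μ n` converges weakly to `ν` if and only if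
`μ n (A ×ˢ B) → ν (A ×ˢ B)` for all Borel sets `A, B`. -/
theorem weak_convergence_iff_rectangles
    {Ω : Type*} [TopologicalSpace Ω] [PolishSpace Ω] [MeasurableSpace Ω] [BorelSpace Ω]
    (μ : ℕ → Measure (Ω × Ω)) (ν : Measure (Ω × Ω))
    [∀ n, IsProbabilityMeasure (μ n)] [IsProbabilityMeasure ν]
    (hmarg1 : ∀ (A : Set Ω), MeasurableSet A → ∀ n, μ n (A ×ˢ Set.univ) = ν (A ×ˢ Set.univ))
    (hmarg2 : ∀ (A : Set Ω), MeasurableSet A → ∀ n, μ n (Set.univ ×ˢ A) = ν (Set.univ ×ˢ A)) :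
    (∀ f : BoundedContinuousFunction (Ω × Ω) ℝ,
        Tendsto (fun n => ∫ p, f p ∂(μ n)) atTop (𝓝 (∫ p, f p ∂ν))) ↔
      (∀ A B : Set Ω, MeasurableSet A → MeasurableSet B →
        Tendsto (fun n => μ n (A ×ˢ B)) atTop (𝓝 (ν (A ×ˢ B)))) := by
  constructor
  · -- Weak convergence implies convergence on rectangles.
    intro h A B hA hB
    -- ProbabilityMeasure versions and weak convergence
    set P : ℕ → ProbabilityMeasure (Ω × Ω) := fun n => ⟨μ n, inferInstance⟩ with hP
    set Q : ProbabilityMeasure (Ω × Ω) := ⟨ν, inferInstance⟩ with hQdef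
    have hQ : Tendsto P atTop (𝓝 Q) :=
      ProbabilityMeasure.tendsto_iff_forall_integral_tendsto.mpr (fun f => h f)
    have h_closed : ∀ F : Set (Ω × Ω), IsClosed F →
        atTop.limsup (fun n => μ n F) ≤ ν F :=
      fun F hF => ProbabilityMeasure.limsup_measure_closed_le_of_tendsto hQ hF
    have h_open : ∀ G : Set (Ω × Ω), IsOpen G →
        ν G ≤ atTop.liminf (fun n => μ n G) :=
      fun G hG => le_measure_liminf_of_limsup_measure_compl_le hG.measurableSet
        (h_closed _ (isClosed_compl_iff.mpr hG))
    set t := A ×ˢ B with ht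
    -- Upper bound for the limsup
    have hup : atTop.limsup (fun n => μ n t) ≤ ν t := by
      apply ENNReal.le_of_forall_pos_le_add
      intro ε hε _
      set c : ℝ≥0∞ := (ε : ℝ≥0∞) / 2 with hc
      have hc0 : c ≠ 0 := by
        simp [hc, ENNReal.div_eq_zero_iff, hε.ne']
      obtain ⟨F₁, hF₁A, hF₁c, hF₁⟩ :=
        hA.exists_isClosed_diff_lt (μ := ν.fst) (measure_ne_top _ _) hc0
      obtain ⟨F₂, hF₂B, hF₂c, hF₂⟩ :=
        hB.exists_isClosed_diff_lt (μ := ν.snd) (measure_ne_top _ _) hc0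
      have hm1 : ∀ n, μ n ((A \ F₁) ×ˢ univ) ≤ c := by
        intro n
        rw [hmarg1 (A \ F₁) (hA.diff hF₁c.measurableSet) n]
        have : ν ((A \ F₁) ×ˢ univ) = ν.fst (A \ F₁) := by
          rw [Measure.fst_apply (hA.diff hF₁c.measurableSet), prod_univ]
        rw [this]
        exact hF₁.le
      have hm2 : ∀ n, μ n (univ ×ˢ (B \ F₂)) ≤ c := by
        intro n
        rw [hmarg2 (B \ F₂) (hB.diff hF₂c.measurableSet) n]
        have : ν (univ ×ˢ (B \ F₂)) = ν.snd (B \ F₂) := by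
          rw [Measure.snd_apply (hB.diff hF₂c.measurableSet), univ_prod]
        rw [this]
        exact hF₂.le
      have hsub : t ⊆ (F₁ ×ˢ F₂ ∪ (A \ F₁) ×ˢ univ) ∪ univ ×ˢ (B \ F₂) := by
        rintro ⟨x, y⟩ ⟨hx, hy⟩
        simp only [mem_union, mem_prod, mem_univ, mem_diff, and_true, true_and]
        by_cases h1 : x ∈ F₁
        · by_cases h2 : y ∈ F₂
          · exact Or.inl (Or.inl ⟨h1, h2⟩)
          · exact Or.inr ⟨hy, h2⟩
        · exact Or.inl (Or.inr ⟨hx, h1⟩)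
      have hb : ∀ n, μ n t ≤ μ n (F₁ ×ˢ F₂) + (c + c) := by
        intro n
        calc μ n t ≤ μ n ((F₁ ×ˢ F₂ ∪ (A \ F₁) ×ˢ univ) ∪ univ ×ˢ (B \ F₂)) :=
              measure_mono hsub
          _ ≤ (μ n (F₁ ×ˢ F₂) + μ n ((A \ F₁) ×ˢ univ)) + μ n (univ ×ˢ (B \ F₂)) :=
              le_trans (measure_union_le _ _) (add_le_add_left (measure_union_le _ _) _)
          _ ≤ (μ n (F₁ ×ˢ F₂) + c) + c :=
              add_le_add (add_le_add_right (hm1 n) _) (hm2 n)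
          _ = μ n (F₁ ×ˢ F₂) + (c + c) := by ring
      have hbl : IsBoundedUnder (· ≤ ·) atTop (fun n => μ n (F₁ ×ˢ F₂)) :=
        ⟨⊤, Eventually.of_forall fun n => le_top⟩
      have hcb : IsCoboundedUnder (· ≤ ·) atTop (fun n => μ n (F₁ ×ˢ F₂)) :=
        Filter.IsBoundedUnder.isCoboundedUnder_le ⟨0, Eventually.of_forall fun n => by positivity⟩
      calc atTop.limsup (fun n => μ n t)
          ≤ atTop.limsup (fun n => μ n (F₁ ×ˢ F₂) + (c + c)) :=
            limsup_le_limsup (Eventually.of_forall hb)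
        _ = atTop.limsup (fun n => μ n (F₁ ×ˢ F₂)) + (c + c) :=
            limsup_add_const atTop _ (c + c) hbl hcb
        _ ≤ ν (F₁ ×ˢ F₂) + (c + c) :=
            add_le_add_left (h_closed _ (hF₁c.prod hF₂c)) _
        _ ≤ ν t + (c + c) :=
            add_le_add_left (measure_mono (Set.prod_mono hF₁A hF₂B)) _
        _ = ν t + ε := by rw [hc, ENNReal.add_halves]
    -- Lower bound for the liminf
    have hlow : ν t ≤ atTop.liminf (fun n => μ n t) := by
      apply ENNReal.le_of_forall_pos_le_add
      intro ε hε _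
      set c : ℝ≥0∞ := (ε : ℝ≥0∞) / 2 with hc
      have hc0 : c ≠ 0 := by
        simp [hc, ENNReal.div_eq_zero_iff, hε.ne']
      obtain ⟨U₁, hAU₁, hU₁o, -, hU₁⟩ :=
        hA.exists_isOpen_diff_lt (μ := ν.fst) (measure_ne_top _ _) hc0
      obtain ⟨U₂, hBU₂, hU₂o, -, hU₂⟩ :=
        hB.exists_isOpen_diff_lt (μ := ν.snd) (measure_ne_top _ _) hc0
      have hm1 : ∀ n, μ n ((U₁ \ A) ×ˢ univ) ≤ c := by
        intro n
        rw [hmarg1 (U₁ \ A) (hU₁o.measurableSet.diff hA) n]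
        have : ν ((U₁ \ A) ×ˢ univ) = ν.fst (U₁ \ A) := by
          rw [Measure.fst_apply (hU₁o.measurableSet.diff hA), prod_univ]
        rw [this]
        exact hU₁.le
      have hm2 : ∀ n, μ n (univ ×ˢ (U₂ \ B)) ≤ c := by
        intro n
        rw [hmarg2 (U₂ \ B) (hU₂o.measurableSet.diff hB) n]
        have : ν (univ ×ˢ (U₂ \ B)) = ν.snd (U₂ \ B) := by
          rw [Measure.snd_apply (hU₂o.measurableSet.diff hB), univ_prod]
        rw [this]
        exact hU₂.le
      have hsub : U₁ ×ˢ U₂ ⊆ (t ∪ (U₁ \ A) ×ˢ univ) ∪ univ ×ˢ (U₂ \ B) := by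
        rintro ⟨x, y⟩ ⟨hx, hy⟩
        simp only [ht, mem_union, mem_prod, mem_univ, mem_diff, and_true, true_and]
        by_cases h1 : x ∈ A
        · by_cases h2 : y ∈ B
          · exact Or.inl (Or.inl ⟨h1, h2⟩)
          · exact Or.inr ⟨hy, h2⟩
        · exact Or.inl (Or.inr ⟨hx, h1⟩)
      have hb : ∀ n, μ n (U₁ ×ˢ U₂) ≤ μ n t + (c + c) := by
        intro n
        calc μ n (U₁ ×ˢ U₂) ≤ μ n ((t ∪ (U₁ \ A) ×ˢ univ) ∪ univ ×ˢ (U₂ \ B)) :=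
              measure_mono hsub
          _ ≤ (μ n t + μ n ((U₁ \ A) ×ˢ univ)) + μ n (univ ×ˢ (U₂ \ B)) :=
              le_trans (measure_union_le _ _) (add_le_add_left (measure_union_le _ _) _)
          _ ≤ (μ n t + c) + c :=
              add_le_add (add_le_add_right (hm1 n) _) (hm2 n)
          _ = μ n t + (c + c) := by ring
      have hbl : IsBoundedUnder (· ≥ ·) atTop (fun n => μ n t) :=
        ⟨0, Eventually.of_forall fun n => zero_le⟩
      have hcb : IsCoboundedUnder (· ≥ ·) atTop (fun n => μ n t) :=
        Filter.IsBoundedUnder.isCoboundedUnder_ge ⟨⊤, Eventually.of_forall fun n => by simp⟩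
      calc ν t ≤ ν (U₁ ×ˢ U₂) := measure_mono (Set.prod_mono hAU₁ hBU₂)
        _ ≤ atTop.liminf (fun n => μ n (U₁ ×ˢ U₂)) := h_open _ (hU₁o.prod hU₂o)
        _ ≤ atTop.liminf (fun n => μ n t + (c + c)) :=
            liminf_le_liminf (Eventually.of_forall hb)
        _ = atTop.liminf (fun n => μ n t) + (c + c) :=
            liminf_add_const atTop _ (c + c) hcb hbl
        _ = atTop.liminf (fun n => μ n t) + ε := by rw [hc, ENNReal.add_halves]
    have hll : atTop.liminf (fun n => μ n t) ≤ atTop.limsup (fun n => μ n t) :=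
      liminf_le_limsup
    have h1 : atTop.liminf (fun n => μ n t) = ν t :=
      le_antisymm (hll.trans hup) hlow
    have h2 : atTop.limsup (fun n => μ n t) = ν t :=
      le_antisymm hup (hlow.trans hll)
    exact tendsto_of_liminf_eq_limsup h1 h2
  · -- Convergence on rectangles implies weak convergence.
    intro h f
    -- real-valued version of the rectangle convergence
    have hrectR : ∀ A B : Set Ω, MeasurableSet A → MeasurableSet B →
        Tendsto (fun n => ((μ n) (A ×ˢ B)).toReal) atTop (𝓝 ((ν (A ×ˢ B)).toReal)) := by
      intro A B hA hB
      exact (ENNReal.tendsto_toReal (measure_ne_top _ _)).comp (h A B hA hB)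
    -- liminf condition for open sets
    have h_opens : ∀ G : Set (Ω × Ω), IsOpen G →
        ν G ≤ atTop.liminf (fun n => μ n G) := by
      intro G hG
      obtain ⟨b, hb_count, -, hb_basis⟩ := TopologicalSpace.exists_countable_basis Ω
      set Pa : Set (Set Ω × Set Ω) :=
        {p | p.1 ∈ b ∧ p.2 ∈ b ∧ p.1 ×ˢ p.2 ⊆ G} with hPa
      have hPc : Pa.Countable :=
        (hb_count.prod hb_count).mono (fun p hp => Set.mem_prod.mpr ⟨hp.1, hp.2.1⟩)
      have hG_eq : G = ⋃ p ∈ Pa, p.1 ×ˢ p.2 := by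
        apply Subset.antisymm
        · intro x hx
          obtain ⟨u, v, hu, hv, hxu, hxv, huv⟩ := isOpen_prod_iff.mp hG x.1 x.2 hx
          obtain ⟨s, hsb, hxs, hsu⟩ := hb_basis.exists_subset_of_mem_open hxu hu
          obtain ⟨tt, htb, hxt, htv⟩ := hb_basis.exists_subset_of_mem_open hxv hv
          have hst : (s, tt) ∈ Pa := ⟨hsb, htb, (prod_mono hsu htv).trans huv⟩
          exact mem_biUnion hst ⟨hxs, hxt⟩
        · exact iUnion₂_subset fun p hp => hp.2.2
      rcases Pa.eq_empty_or_nonempty with hPe | hPne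
      · have : G = ∅ := by rw [hG_eq, hPe]; simp
        simp [this]
      obtain ⟨e, he⟩ := hPc.exists_eq_range hPne
      have heP : ∀ i, e i ∈ Pa := fun i => he ▸ mem_range_self i
      have he1 : ∀ i, MeasurableSet (e i).1 :=
        fun i => (hb_basis.isOpen (heP i).1).measurableSet
      have he2 : ∀ i, MeasurableSet (e i).2 :=
        fun i => (hb_basis.isOpen (heP i).2.1).measurableSet
      have hG_eq' : G = ⋃ i, (e i).1 ×ˢ (e i).2 := by
        rw [hG_eq, he, biUnion_range]
      set E : ℕ → Set (Ω × Ω) := fun i => (e i).1 ×ˢ (e i).2 with hE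
      -- each accumulated finite union converges
      have hstep : ∀ k, ν (accumulate E k) ≤ atTop.liminf (fun n => μ n G) := by
        intro k
        have hacc : accumulate E k = ⋃ i ∈ Finset.range (k + 1), (e i).1 ×ˢ (e i).2 := by
          ext x
          simp [Set.accumulate_def, Nat.lt_succ_iff, hE]
        have hfin : Tendsto (fun n => ((μ n) (accumulate E k)).toReal) atTop
            (𝓝 ((ν (accumulate E k)).toReal)) := by
          rw [hacc]
          exact tendsto_finset_union μ ν hrectR (Finset.range (k + 1))
            (fun i => (e i).1) (fun i => (e i).2) he1 he2
        have hENN : Tendsto (fun n => μ n (accumulate E k)) atTop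
            (𝓝 (ν (accumulate E k))) := by
          have h1 := ENNReal.tendsto_ofReal hfin
          simpa [ENNReal.ofReal_toReal (measure_ne_top _ _)] using h1
        have hsubG : accumulate E k ⊆ G := by
          rw [hG_eq', ← iUnion_accumulate]
          exact subset_iUnion (accumulate E) k
        calc ν (accumulate E k) = atTop.liminf (fun n => μ n (accumulate E k)) :=
              hENN.liminf_eq.symm
          _ ≤ atTop.liminf (fun n => μ n G) :=
              liminf_le_liminf (Eventually.of_forall fun n => measure_mono hsubG)
      have hlim : Tendsto (fun k => ν (accumulate E k)) atTop (𝓝 (ν G)) := by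
        have := tendsto_measure_iUnion_accumulate (μ := ν) (f := E)
        rw [hG_eq']
        exact this
      exact le_of_tendsto hlim (Eventually.of_forall hstep)
    -- pass to ProbabilityMeasure and apply portmanteau
    set P : ℕ → ProbabilityMeasure (Ω × Ω) := fun n => ⟨μ n, inferInstance⟩ with hPdef
    set Q : ProbabilityMeasure (Ω × Ω) := ⟨ν, inferInstance⟩ with hQdef
    have h_opens' : ∀ G : Set (Ω × Ω), IsOpen G →
        Q G ≤ atTop.liminf (fun n => P n G) := by
      intro G hG
      have hENN := h_opens G hG
      have aux : ENNReal.ofNNReal (atTop.liminf fun i => P i G) =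
          atTop.liminf (ENNReal.ofNNReal ∘ fun i => P i G) := by
        refine Monotone.map_liminf_of_continuousAt (F := atTop) ENNReal.coe_mono
          (fun i => P i G) ?_ ?_ ?_
        · exact ENNReal.continuous_coe.continuousAt
        · exact IsBoundedUnder.isCoboundedUnder_ge ⟨1, by simp⟩
        · exact ⟨0, by simp⟩
      rw [← ENNReal.coe_le_coe, aux]
      have hc1 : (ENNReal.ofNNReal (Q G)) = ν G :=
        ProbabilityMeasure.ennreal_coeFn_eq_coeFn_toMeasure Q G
      have hc2 : (ENNReal.ofNNReal ∘ fun i => P i G) = fun i => μ i G := by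
        funext i
        exact ProbabilityMeasure.ennreal_coeFn_eq_coeFn_toMeasure (P i) G
      rw [hc1, hc2]
      exact hENN
    have htend : atTop.Tendsto (fun n => P n) (𝓝 Q) :=
      MeasureTheory.tendsto_of_forall_isOpen_le_liminf h_opens'
    exact ProbabilityMeasure.tendsto_iff_forall_integral_tendsto.mp htend f
end

section
/- Let Ω be a Polish space with Borel σ-field B, and let μ_n (n ∈ ℕ) and μ be probability measures on Ω × Ω. If μ_n(A × B) → μ(A × B) for all Borel sets A, B ∈ B, then for every compact set K ⊆ Ω × Ω one has limsup_{n→∞} μ_n(K) ≤ μ(K). -/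
open MeasureTheory Filter Topology Set ENNReal

private lemma tendsto_finset_union_rect
    {Ω : Type*} [MeasurableSpace Ω]
    (μ : ℕ → Measure (Ω × Ω)) (ν : Measure (Ω × Ω))
    [∀ n, IsProbabilityMeasure (μ n)] [IsProbabilityMeasure ν]
    (h : ∀ A B : Set Ω, MeasurableSet A → MeasurableSet B →
      Tendsto (fun n => μ n (A ×ˢ B)) atTop (𝓝 (ν (A ×ˢ B))))
    {ι : Type*} [DecidableEq ι] (s : Finset ι) :
    ∀ (A B : ι → Set Ω), (∀ i ∈ s, MeasurableSet (A i)) → (∀ i ∈ s, MeasurableSet (B i)) →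
      Tendsto (fun n => μ n (⋃ i ∈ s, A i ×ˢ B i)) atTop (𝓝 (ν (⋃ i ∈ s, A i ×ˢ B i))) := by
  induction s using Finset.induction_on with
  | empty =>
      intro A B _ _
      simp [tendsto_const_nhds]
  | @insert a s ha IH =>
      intro A B hA hB
      have hAa : MeasurableSet (A a) := hA a (Finset.mem_insert_self a s)
      have hBa : MeasurableSet (B a) := hB a (Finset.mem_insert_self a s)
      have hA' : ∀ i ∈ s, MeasurableSet (A i) :=
        fun i hi => hA i (Finset.mem_insert_of_mem hi)
      have hB' : ∀ i ∈ s, MeasurableSet (B i) :=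
        fun i hi => hB i (Finset.mem_insert_of_mem hi)
      set S : Set (Ω × Ω) := A a ×ˢ B a with hSdef
      set T : Set (Ω × Ω) := ⋃ i ∈ s, A i ×ˢ B i with hTdef
      have hTm : MeasurableSet T := by
        refine MeasurableSet.biUnion s.countable_toSet (fun i hi => ?_)
        exact ((hA' i hi).prod (hB' i hi))
      have hS : Tendsto (fun n => μ n S) atTop (𝓝 (ν S)) := h _ _ hAa hBa
      have hT : Tendsto (fun n => μ n T) atTop (𝓝 (ν T)) := IH A B hA' hB'
      have hInter : S ∩ T = ⋃ i ∈ s, (A a ∩ A i) ×ˢ (B a ∩ B i) := by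
        rw [hTdef, inter_iUnion₂]
        refine iUnion₂_congr fun i _ => ?_
        rw [Set.prod_inter_prod]
      have hI : Tendsto (fun n => μ n (S ∩ T)) atTop (𝓝 (ν (S ∩ T))) := by
        rw [hInter]
        exact IH _ _ (fun i hi => hAa.inter (hA' i hi)) (fun i hi => hBa.inter (hB' i hi))
      have key : ∀ (m : Measure (Ω × Ω)) [IsProbabilityMeasure m],
          m (S ∪ T) = m S + m T - m (S ∩ T) := by
        intro m _
        have h0 := measure_union_add_inter (μ := m) S hTm
        rw [eq_comm, ENNReal.sub_eq_of_eq_add (measure_ne_top m _)]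
        rw [eq_comm, h0]
      have hgoal : ⋃ i ∈ insert a s, A i ×ˢ B i = S ∪ T := by
        simp [hSdef, hTdef]
      rw [hgoal]
      have hfin : ν (S ∩ T) ≠ ∞ := measure_ne_top ν _
      have hsub := ENNReal.Tendsto.sub (hS.add hT) hI (Or.inr hfin)
      rw [key ν]
      convert hsub using 2
      rw [key]

/-- Let `Ω` be a Polish space with Borel σ-field, and let `μ n` (`n ∈ ℕ`)
and `ν` be probability measures on `Ω × Ω`. If `μ n (A ×ˢ B) → ν (A ×ˢ B)` for all Borel
sets `A, B ⊆ Ω`, then for every compact `K ⊆ Ω × Ω` one has `limsup_n μ n K ≤ ν K`. -/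
theorem limsup_le_of_rectangles_tendsto
    {Ω : Type*} [TopologicalSpace Ω] [PolishSpace Ω] [MeasurableSpace Ω] [BorelSpace Ω]
    (μ : ℕ → Measure (Ω × Ω)) (ν : Measure (Ω × Ω))
    [∀ n, IsProbabilityMeasure (μ n)] [IsProbabilityMeasure ν]
    (h : ∀ A B : Set Ω, MeasurableSet A → MeasurableSet B →
      Tendsto (fun n => μ n (A ×ˢ B)) atTop (𝓝 (ν (A ×ˢ B))))
    (K : Set (Ω × Ω)) (hK : IsCompact K) :
    Filter.limsup (fun n => μ n K) atTop ≤ ν K := by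
  have : ν.WeaklyRegular :=
    MeasureTheory.Measure.WeaklyRegular.of_pseudoMetrizableSpace_of_isFiniteMeasure ν
  -- reduce to open sets via outer regularity
  rw [Set.measure_eq_iInf_isOpen K ν]
  simp only [le_iInf_iff]
  intro U hKU hU
  -- cover K by finitely many open rectangles inside U
  have hrect : ∀ x : Ω × Ω, x ∈ K → ∃ a b : Set Ω,
      IsOpen a ∧ IsOpen b ∧ x ∈ a ×ˢ b ∧ a ×ˢ b ⊆ U := by
    intro x hx
    obtain ⟨a, b, ha, hb, hxa, hxb, hab⟩ := isOpen_prod_iff.mp hU x.1 x.2 (hKU hx)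
    exact ⟨a, b, ha, hb, ⟨hxa, hxb⟩, hab⟩
  choose! A B hAo hBo hmem hsub using hrect
  have hcov : K ⊆ ⋃ x ∈ K, A x ×ˢ B x := fun x hx => mem_biUnion hx (hmem x hx)
  obtain ⟨t, hts, htfin, htcov⟩ :=
    hK.elim_finite_subcover_image (fun x hx => ((hAo x hx).prod (hBo x hx))) hcov
  classical
  obtain ⟨t', ht'⟩ := htfin.exists_finset_coe
  have htK : ∀ x ∈ t', x ∈ K := fun x hx => hts (ht' ▸ hx)
  set V : Set (Ω × Ω) := ⋃ x ∈ t', A x ×ˢ B x with hVdef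
  have hKV : K ⊆ V := by
    refine htcov.trans ?_
    rw [hVdef, ← ht']
    simp
  have hVU : V ⊆ U := by
    rw [hVdef]
    exact iUnion₂_subset fun x hx => hsub x (htK x hx)
  have hV : Tendsto (fun n => μ n V) atTop (𝓝 (ν V)) := by
    rw [hVdef]
    exact tendsto_finset_union_rect μ ν h t' A B
      (fun x hx => (hAo x (htK x hx)).measurableSet)
      (fun x hx => (hBo x (htK x hx)).measurableSet)
  calc Filter.limsup (fun n => μ n K) atTop
      ≤ Filter.limsup (fun n => μ n V) atTop := by
        refine limsup_le_limsup (Eventually.of_forall fun n => measure_mono hKV)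
    _ = ν V := hV.limsup_eq
    _ ≤ ν U := measure_mono hVU
end

section
/- Let Ω be a Polish space with Borel σ-field B, P a Borel probability measure on Ω, and T : Ω → Ω a measurable map preserving P (i.e. P ∘ T^{-1} = P). Then T is strongly mixing, i.e. P(A ∩ T^{-n}B) → P(A)·P(B) for all A, B ∈ B, if and only if the image measures P ∘ (T^0, T^n)^{-1} (the laws of ω ↦ (ω, T^n ω) under P, as probability measures on Ω × Ω) converge weakly to the product measure P ⊗ P as n → ∞. -/
open MeasureTheory Filter Topology Set TopologicalSpace
open scoped NNReal ENNReal

private lemma map_iterate_eq {Ω : Type*} [MeasurableSpace Ω] (P : Measure Ω) (T : Ω → Ω)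
    (hT : Measurable T) (hpres : P.map T = P) : ∀ n, P.map (T^[n]) = P := by
  intro n
  induction n with
  | zero => simp [Measure.map_id]
  | succ n ih =>
    rw [Function.iterate_succ', ← Measure.map_map hT (hT.iterate n), ih, hpres]

private lemma conv_biUnion {α : Type*} [MeasurableSpace α]
    {μs : ℕ → Measure α} {ν : Measure α}
    [∀ n, IsFiniteMeasure (μs n)] [IsFiniteMeasure ν]
    {R : Set (Set α)} (hRmeas : ∀ S ∈ R, MeasurableSet S)
    (hRinter : ∀ S ∈ R, ∀ S' ∈ R, S ∩ S' ∈ R)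
    (hconv : ∀ S ∈ R, Tendsto (fun n => (μs n S).toReal) atTop (𝓝 ((ν S).toReal))) :
    ∀ (s : Finset ℕ) (f : ℕ → Set α), (∀ i ∈ s, f i ∈ R) →
      Tendsto (fun n => (μs n (⋃ i ∈ s, f i)).toReal) atTop
        (𝓝 ((ν (⋃ i ∈ s, f i)).toReal)) := by
  intro s
  induction s using Finset.induction_on with
  | empty => intro f _; simp
  | @insert a s ha IH =>
    intro f hf
    have hfa : f a ∈ R := hf a (Finset.mem_insert_self a s)
    have hfs : ∀ i ∈ s, f i ∈ R := fun i hi => hf i (Finset.mem_insert_of_mem hi)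
    have hU := IH f hfs
    have hI : Tendsto (fun n => (μs n (f a ∩ ⋃ i ∈ s, f i)).toReal) atTop
        (𝓝 ((ν (f a ∩ ⋃ i ∈ s, f i)).toReal)) := by
      have heq : f a ∩ ⋃ i ∈ s, f i = ⋃ i ∈ s, (f a ∩ f i) := by
        simp [Set.inter_iUnion]
      rw [heq]
      exact IH (fun i => f a ∩ f i) (fun i hi => hRinter _ hfa _ (hfs i hi))
    have hfa' := hconv _ hfa
    have hUmeas : MeasurableSet (⋃ i ∈ s, f i) :=
      s.measurableSet_biUnion (fun i hi => hRmeas _ (hfs i hi))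
    have key : ∀ (m : Measure α), IsFiniteMeasure m →
        (m (f a ∪ ⋃ i ∈ s, f i)).toReal
          = (m (f a)).toReal + (m (⋃ i ∈ s, f i)).toReal
            - (m (f a ∩ ⋃ i ∈ s, f i)).toReal := by
      intro m hm
      have h1 := measure_union_add_inter (μ := m) (f a) hUmeas
      have h2 := congrArg ENNReal.toReal h1
      rw [ENNReal.toReal_add (measure_ne_top _ _) (measure_ne_top _ _),
          ENNReal.toReal_add (measure_ne_top _ _) (measure_ne_top _ _)] at h2
      linarith
    have hcomb : Tendsto (fun n => (μs n (f a)).toReal + (μs n (⋃ i ∈ s, f i)).toReal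
        - (μs n (f a ∩ ⋃ i ∈ s, f i)).toReal) atTop
        (𝓝 ((ν (f a)).toReal + (ν (⋃ i ∈ s, f i)).toReal
          - (ν (f a ∩ ⋃ i ∈ s, f i)).toReal)) := (hfa'.add hU).sub hI
    rw [Finset.set_biUnion_insert, key ν inferInstance]
    exact hcomb.congr (fun n => (key (μs n) inferInstance).symm)

/-- Let `Ω` be a Polish space with Borel σ-field, `P` a Borel probability
measure on `Ω`, and `T : Ω → Ω` a measurable map preserving `P`. Then `T` is strongly mixing,
i.e. `P (A ∩ T⁻ⁿ B) → P A * P B` for all Borel `A, B`, if and only if the laws of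
`ω ↦ (ω, T^[n] ω)` under `P` converge weakly to the product measure `P ⊗ P`. -/
theorem stronglyMixing_iff_weak_convergence
    {Ω : Type*} [TopologicalSpace Ω] [PolishSpace Ω] [MeasurableSpace Ω] [BorelSpace Ω]
    (P : Measure Ω) [IsProbabilityMeasure P]
    (T : Ω → Ω) (hT : Measurable T) (hpres : P.map T = P) :
    (∀ A B : Set Ω, MeasurableSet A → MeasurableSet B →
        Tendsto (fun n => P (A ∩ T^[n] ⁻¹' B)) atTop (𝓝 (P A * P B))) ↔
      (∀ f : BoundedContinuousFunction (Ω × Ω) ℝ,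
        Tendsto (fun n => ∫ p, f p ∂(P.map (fun ω => (ω, T^[n] ω)))) atTop
          (𝓝 (∫ p, f p ∂(P.prod P)))) := by
  have hmeasn : ∀ n : ℕ, Measurable (T^[n]) := fun n => hT.iterate n
  have hpairn : ∀ n : ℕ, Measurable (fun ω => (ω, T^[n] ω)) :=
    fun n => measurable_id.prodMk (hmeasn n)
  set μs : ℕ → Measure (Ω × Ω) := fun n => P.map (fun ω => (ω, T^[n] ω)) with hμs_def
  haveI : ∀ n, IsProbabilityMeasure (μs n) :=
    fun n => Measure.isProbabilityMeasure_map (hpairn n).aemeasurable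
  set ν : Measure (Ω × Ω) := P.prod P with hν_def
  constructor
  · -- mixing → weak convergence
    intro hmix f
    -- the class of measurable rectangles
    set R : Set (Set (Ω × Ω)) :=
      {S | ∃ A B : Set Ω, MeasurableSet A ∧ MeasurableSet B ∧ S = A ×ˢ B} with hR_def
    have hRmeas : ∀ S ∈ R, MeasurableSet S := by
      rintro S ⟨A, B, hA, hB, rfl⟩; exact hA.prod hB
    have hRinter : ∀ S ∈ R, ∀ S' ∈ R, S ∩ S' ∈ R := by
      rintro S ⟨A, B, hA, hB, rfl⟩ S' ⟨A', B', hA', hB', rfl⟩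
      exact ⟨A ∩ A', B ∩ B', hA.inter hA', hB.inter hB', Set.prod_inter_prod⟩
    have hconv : ∀ S ∈ R, Tendsto (fun n => (μs n S).toReal) atTop (𝓝 ((ν S).toReal)) := by
      rintro S ⟨A, B, hA, hB, rfl⟩
      have hrect : ∀ n, μs n (A ×ˢ B) = P (A ∩ T^[n] ⁻¹' B) := by
        intro n
        rw [hμs_def, Measure.map_apply (hpairn n) (hA.prod hB), Set.mk_preimage_prod]
        rfl
      have hν : ν (A ×ˢ B) = P A * P B := by rw [hν_def, Measure.prod_prod]
      have := (ENNReal.tendsto_toReal_iff (fun n => measure_ne_top _ _)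
        (ENNReal.mul_ne_top (measure_ne_top _ _) (measure_ne_top _ _))).mpr (hmix A B hA hB)
      simp only [← hrect, ← hν] at this
      exact this
    -- liminf condition for open sets
    have h_open : ∀ G : Set (Ω × Ω), IsOpen G →
        ν G ≤ atTop.liminf (fun n => μs n G) := by
      intro G hG
      obtain ⟨S, hS_sub, hG_eq⟩ :=
        ((isBasis_countableBasis Ω).prod (isBasis_countableBasis Ω)).open_eq_sUnion hG
      have hS_count : S.Countable :=
        (((countable_countableBasis Ω).image2 (countable_countableBasis Ω) _)).mono hS_sub
      obtain ⟨e, he⟩ := (hS_count.insert ∅).exists_eq_range (Set.insert_nonempty _ _)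
      have hGe : G = ⋃ n, e n := by
        rw [hG_eq, ← Set.sUnion_range, ← he, Set.sUnion_insert, Set.empty_union]
      have heR : ∀ n, e n ∈ R := by
        intro n
        have : e n ∈ insert ∅ S := he ▸ Set.mem_range_self n
        rcases this with h | h
        · exact ⟨∅, ∅, MeasurableSet.empty, MeasurableSet.empty, by simp [h]⟩
        · obtain ⟨b1, hb1, b2, hb2, hprod⟩ := hS_sub h
          exact ⟨b1, b2, (isOpen_of_mem_countableBasis hb1).measurableSet,
            (isOpen_of_mem_countableBasis hb2).measurableSet, hprod.symm⟩
      set E : ℕ → Set (Ω × Ω) := fun K => ⋃ i ∈ Finset.range K, e i with hE_def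
      have hmono : Monotone E := by
        intro K L hKL
        exact Set.biUnion_subset_biUnion_left
          (Finset.coe_subset.mpr (Finset.range_subset_range.mpr hKL))
      have hEU : (⋃ K, E K) = G := by
        rw [hGe]
        ext x
        simp only [hE_def, Set.mem_iUnion, Finset.mem_range]
        constructor
        · rintro ⟨K, i, hi, hx⟩; exact ⟨i, hx⟩
        · rintro ⟨i, hx⟩; exact ⟨i + 1, i, Nat.lt_succ_self i, hx⟩
      have htend : Tendsto (fun K => ν (E K)) atTop (𝓝 (ν G)) := by
        rw [← hEU]; exact tendsto_measure_iUnion_atTop hmono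
      have hEK : ∀ K, ν (E K) ≤ atTop.liminf (fun n => μs n G) := by
        intro K
        have hconvK := conv_biUnion hRmeas hRinter hconv (Finset.range K) e
          (fun i _ => heR i)
        have hconvK' : Tendsto (fun n => μs n (E K)) atTop (𝓝 (ν (E K))) :=
          (ENNReal.tendsto_toReal_iff (fun n => measure_ne_top _ _)
            (measure_ne_top _ _)).mp hconvK
        have hliminf : atTop.liminf (fun n => μs n (E K)) = ν (E K) :=
          hconvK'.liminf_eq
        rw [← hliminf]
        exact Filter.liminf_le_liminf (Eventually.of_forall
          (fun n => measure_mono (hEU ▸ Set.subset_iUnion E K)))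
      exact le_of_tendsto htend (Eventually.of_forall hEK)
    -- apply the portmanteau theorem
    let μsP : ℕ → ProbabilityMeasure (Ω × Ω) := fun n => ⟨μs n, inferInstance⟩
    let νP : ProbabilityMeasure (Ω × Ω) := ⟨ν, by rw [hν_def]; infer_instance⟩
    have h_opens : ∀ G, IsOpen G → νP G ≤ atTop.liminf (fun i => μsP i G) := by
      intro G hGopen
      have aux : (ENNReal.ofNNReal (atTop.liminf (fun i => μsP i G))) =
          atTop.liminf (fun i => ((μsP i G : ℝ≥0) : ℝ≥0∞)) := by
        refine Monotone.map_liminf_of_continuousAt (F := atTop) ENNReal.coe_mono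
          (fun i => μsP i G) ?_ ?_ ?_
        · exact ENNReal.continuous_coe.continuousAt
        · exact IsBoundedUnder.isCoboundedUnder_ge ⟨1, by simp⟩
        · exact ⟨0, by simp⟩
      rw [← ENNReal.coe_le_coe, aux]
      simp only [ProbabilityMeasure.ennreal_coeFn_eq_coeFn_toMeasure]
      exact h_open G hGopen
    have htendP := MeasureTheory.tendsto_of_forall_isOpen_le_liminf h_opens
    exact ProbabilityMeasure.tendsto_iff_forall_integral_tendsto.mp htendP f
  · -- weak convergence → mixing
    intro H A B hA hB
    letI := upgradeIsCompletelyMetrizable Ω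
    have hpresn := map_iterate_eq P T hT hpres
    set a : Ω → ℝ := A.indicator 1 with ha_def
    set b : Ω → ℝ := B.indicator 1 with hb_def
    have ha_int : Integrable a P :=
      (integrable_indicator_iff hA).mpr ((integrableOn_const_iff (C := (1:ℝ))).mpr (Or.inr (measure_lt_top P A)))
    have hb_int : Integrable b P :=
      (integrable_indicator_iff hB).mpr ((integrableOn_const_iff (C := (1:ℝ))).mpr (Or.inr (measure_lt_top P B)))
    have hb_bd : ∀ x, ‖b x‖ ≤ 1 := by
      intro x
      rw [hb_def]
      by_cases h : x ∈ B <;> simp [Set.indicator_apply, h]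
    have hind : ∀ n : ℕ, (fun ω => a ω * b (T^[n] ω))
        = (A ∩ T^[n] ⁻¹' B).indicator (1 : Ω → ℝ) := by
      intro n
      funext ω
      by_cases h1 : ω ∈ A <;> by_cases h2 : T^[n] ω ∈ B <;>
        simp [ha_def, hb_def, Set.indicator_apply, h1, h2]
    have hrep : ∀ n : ℕ, (P (A ∩ T^[n] ⁻¹' B)).toReal = ∫ ω, a ω * b (T^[n] ω) ∂P := by
      intro n
      rw [hind n, integral_indicator_one (hA.inter ((hmeasn n) hB)), measureReal_def]
    have hPA : (P A).toReal = ∫ ω, a ω ∂P := (integral_indicator_one hA).symm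
    have hPB : (P B).toReal = ∫ ω, b ω ∂P := (integral_indicator_one hB).symm
    rw [← ENNReal.tendsto_toReal_iff (fun n => measure_ne_top _ _)
      (ENNReal.mul_ne_top (measure_ne_top _ _) (measure_ne_top _ _)), ENNReal.toReal_mul]
    have hfun : (fun n => (P (A ∩ T^[n] ⁻¹' B)).toReal)
        = fun n => ∫ ω, a ω * b (T^[n] ω) ∂P := funext hrep
    rw [hfun, hPA, hPB, Metric.tendsto_atTop]
    intro ε hε
    set δ := ε / 6 with hδ_def
    have hδpos : 0 < δ := by positivity
    obtain ⟨f, hf_close, hf_int⟩ := ha_int.exists_boundedContinuous_integral_sub_le hδpos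
    have hden : (0:ℝ) < ‖f‖ + 1 := by positivity
    obtain ⟨g, hg_close, hg_int⟩ :=
      hb_int.exists_boundedContinuous_integral_sub_le (div_pos hδpos hden)
    set δ' := δ / (‖f‖ + 1) with hδ'_def
    have hδ'pos : 0 < δ' := div_pos hδpos hden
    have hδ'le : δ' ≤ δ := div_le_self hδpos.le (by linarith [norm_nonneg f])
    have hfδ' : ‖f‖ * δ' ≤ δ := by
      rw [hδ'_def]
      calc ‖f‖ * (δ / (‖f‖ + 1)) ≤ (‖f‖ + 1) * (δ / (‖f‖ + 1)) := by
            apply mul_le_mul_of_nonneg_right (by linarith) (le_of_lt hδ'pos)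
        _ = δ := by field_simp
    -- the test function
    let F : BoundedContinuousFunction (Ω × Ω) ℝ :=
      (f.compContinuous ⟨Prod.fst, continuous_fst⟩) *
        (g.compContinuous ⟨Prod.snd, continuous_snd⟩)
    have hF : (fun p : Ω × Ω => F p) = fun p => f p.1 * g p.2 := rfl
    have hμnF : ∀ n : ℕ, ∫ p, F p ∂(μs n) = ∫ ω, f ω * g (T^[n] ω) ∂P := by
      intro n
      rw [hμs_def]
      rw [integral_map (hpairn n).aemeasurable F.continuous.measurable.aestronglyMeasurable]
      simp only [hF]
    have hνF : ∫ p, F p ∂ν = (∫ ω, f ω ∂P) * ∫ ω, g ω ∂P := by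
      rw [hν_def, hF]
      exact integral_prod_mul (f : Ω → ℝ) (g : Ω → ℝ)
    have hH := H F
    rw [show (fun n => ∫ p, F p ∂(P.map fun ω => (ω, T^[n] ω))) = fun n => ∫ p, F p ∂(μs n)
      from rfl] at hH
    simp only [hμnF] at hH
    rw [show ∫ p, F p ∂(P.prod P) = ∫ p, F p ∂ν from rfl, hνF] at hH
    -- compositions
    have hcomp_int : ∀ n : ℕ, Integrable (fun ω => ‖b (T^[n] ω) - g (T^[n] ω)‖) P := by
      intro n
      have hint : Integrable (fun x => ‖b x - g x‖) P := (hb_int.sub hg_int).norm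
      have := (integrable_map_measure
        (by rw [hpresn n]; exact hint.aestronglyMeasurable) (hmeasn n).aemeasurable).mp
        (by rw [hpresn n]; exact hint)
      exact this
    have hcomp_eq : ∀ n : ℕ, ∫ ω, ‖b (T^[n] ω) - g (T^[n] ω)‖ ∂P
        = ∫ x, ‖b x - g x‖ ∂P := by
      intro n
      have hint : Integrable (fun x => ‖b x - g x‖) P := (hb_int.sub hg_int).norm
      conv_rhs => rw [← hpresn n]
      rw [integral_map (hmeasn n).aemeasurable
        (by rw [hpresn n]; exact hint.aestronglyMeasurable)]
    have hab_int : ∀ n : ℕ, Integrable (fun ω => a ω * b (T^[n] ω)) P := by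
      intro n
      rw [hind n]
      exact (integrable_indicator_iff (hA.inter ((hmeasn n) hB))).mpr
        ((integrableOn_const_iff (C := (1:ℝ))).mpr (Or.inr (measure_lt_top P _)))
    have hfg_int : ∀ n : ℕ, Integrable (fun ω => f ω * g (T^[n] ω)) P := by
      intro n
      apply Integrable.mono' (integrable_const (μ := P) (‖f‖ * ‖g‖))
      · exact (f.continuous.measurable.mul
          (g.continuous.measurable.comp (hmeasn n))).aestronglyMeasurable
      · refine Eventually.of_forall fun ω => ?_
        rw [norm_mul]
        exact mul_le_mul (f.norm_coe_le_norm ω) (g.norm_coe_le_norm _) (norm_nonneg _)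
          (norm_nonneg _)
    have haf_int : Integrable (fun x => ‖a x - f x‖) P := (ha_int.sub (f.integrable P)).norm
    -- bound 1
    have bound1 : ∀ n : ℕ, |(∫ ω, a ω * b (T^[n] ω) ∂P) - ∫ ω, f ω * g (T^[n] ω) ∂P| ≤ 2 * δ := by
      intro n
      rw [← integral_sub (hab_int n) (hfg_int n)]
      have step1 : |∫ ω, (a ω * b (T^[n] ω) - f ω * g (T^[n] ω)) ∂P|
          ≤ ∫ ω, ‖a ω * b (T^[n] ω) - f ω * g (T^[n] ω)‖ ∂P := by
        rw [← Real.norm_eq_abs]; exact norm_integral_le_integral_norm _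
      have step2 : ∫ ω, ‖a ω * b (T^[n] ω) - f ω * g (T^[n] ω)‖ ∂P
          ≤ ∫ ω, (‖a ω - f ω‖ + ‖f‖ * ‖b (T^[n] ω) - g (T^[n] ω)‖) ∂P := by
        apply integral_mono ((hab_int n).sub (hfg_int n)).norm
          (haf_int.add ((hcomp_int n).const_mul ‖f‖))
        intro ω
        simp only [Pi.sub_apply, Pi.add_apply]
        have decomp : a ω * b (T^[n] ω) - f ω * g (T^[n] ω)
            = (a ω - f ω) * b (T^[n] ω) + f ω * (b (T^[n] ω) - g (T^[n] ω)) := by ring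
        rw [decomp]
        calc ‖(a ω - f ω) * b (T^[n] ω) + f ω * (b (T^[n] ω) - g (T^[n] ω))‖
            ≤ ‖(a ω - f ω) * b (T^[n] ω)‖ + ‖f ω * (b (T^[n] ω) - g (T^[n] ω))‖ :=
              norm_add_le _ _
          _ ≤ ‖a ω - f ω‖ + ‖f‖ * ‖b (T^[n] ω) - g (T^[n] ω)‖ := by
              rw [norm_mul, norm_mul]
              have h1 : ‖a ω - f ω‖ * ‖b (T^[n] ω)‖ ≤ ‖a ω - f ω‖ :=
                (mul_le_mul_of_nonneg_left (hb_bd _) (norm_nonneg _)).trans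
                  (le_of_eq (mul_one _))
              have h2 : ‖f ω‖ * ‖b (T^[n] ω) - g (T^[n] ω)‖
                  ≤ ‖f‖ * ‖b (T^[n] ω) - g (T^[n] ω)‖ :=
                mul_le_mul_of_nonneg_right (f.norm_coe_le_norm ω) (norm_nonneg _)
              linarith
      have step3 : ∫ ω, (‖a ω - f ω‖ + ‖f‖ * ‖b (T^[n] ω) - g (T^[n] ω)‖) ∂P
          = (∫ x, ‖a x - f x‖ ∂P) + ‖f‖ * ∫ x, ‖b x - g x‖ ∂P := by
        rw [integral_add haf_int ((hcomp_int n).const_mul ‖f‖), integral_const_mul,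
          hcomp_eq n]
      have : (∫ x, ‖a x - f x‖ ∂P) + ‖f‖ * ∫ x, ‖b x - g x‖ ∂P ≤ δ + δ := by
        have h1 : ‖f‖ * ∫ x, ‖b x - g x‖ ∂P ≤ ‖f‖ * δ' :=
          mul_le_mul_of_nonneg_left hg_close (norm_nonneg _)
        have := hfδ'
        linarith [hf_close]
      calc |∫ ω, (a ω * b (T^[n] ω) - f ω * g (T^[n] ω)) ∂P| ≤ _ := step1
        _ ≤ _ := step2
        _ = _ := step3
        _ ≤ δ + δ := this
        _ = 2 * δ := by ring
    -- bound 2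
    have habs_f : |∫ ω, f ω ∂P| ≤ ‖f‖ := by
      calc |∫ ω, f ω ∂P| ≤ ∫ ω, ‖f ω‖ ∂P := by
            rw [← Real.norm_eq_abs]; exact norm_integral_le_integral_norm _
        _ ≤ ∫ _ω, ‖f‖ ∂P := integral_mono (f.integrable P).norm (integrable_const _)
            (fun ω => f.norm_coe_le_norm ω)
        _ = ‖f‖ := by simp
    have habs_b : |∫ ω, b ω ∂P| ≤ 1 := by
      calc |∫ ω, b ω ∂P| ≤ ∫ ω, ‖b ω‖ ∂P := by
            rw [← Real.norm_eq_abs]; exact norm_integral_le_integral_norm _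
        _ ≤ ∫ _ω, (1:ℝ) ∂P := integral_mono hb_int.norm (integrable_const _) hb_bd
        _ = 1 := by simp
    have hdiff_a : |(∫ ω, a ω ∂P) - ∫ ω, f ω ∂P| ≤ δ := by
      rw [← integral_sub ha_int (f.integrable P), ← Real.norm_eq_abs]
      exact (norm_integral_le_integral_norm _).trans hf_close
    have hdiff_b : |(∫ ω, b ω ∂P) - ∫ ω, g ω ∂P| ≤ δ' := by
      rw [← integral_sub hb_int (g.integrable P), ← Real.norm_eq_abs]
      exact (norm_integral_le_integral_norm _).trans hg_close
    have bound2 : |(∫ ω, f ω ∂P) * (∫ ω, g ω ∂P) - (∫ ω, a ω ∂P) * ∫ ω, b ω ∂P| ≤ 2 * δ := by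
      have decomp : (∫ ω, f ω ∂P) * (∫ ω, g ω ∂P) - (∫ ω, a ω ∂P) * ∫ ω, b ω ∂P
          = (∫ ω, f ω ∂P) * ((∫ ω, g ω ∂P) - ∫ ω, b ω ∂P)
            + ((∫ ω, f ω ∂P) - ∫ ω, a ω ∂P) * ∫ ω, b ω ∂P := by ring
      rw [decomp]
      calc |(∫ ω, f ω ∂P) * ((∫ ω, g ω ∂P) - ∫ ω, b ω ∂P)
            + ((∫ ω, f ω ∂P) - ∫ ω, a ω ∂P) * ∫ ω, b ω ∂P|
          ≤ |(∫ ω, f ω ∂P) * ((∫ ω, g ω ∂P) - ∫ ω, b ω ∂P)|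
            + |((∫ ω, f ω ∂P) - ∫ ω, a ω ∂P) * ∫ ω, b ω ∂P| := abs_add_le _ _
        _ = |∫ ω, f ω ∂P| * |(∫ ω, g ω ∂P) - ∫ ω, b ω ∂P|
            + |(∫ ω, f ω ∂P) - ∫ ω, a ω ∂P| * |∫ ω, b ω ∂P| := by rw [abs_mul, abs_mul]
        _ ≤ ‖f‖ * δ' + δ * 1 := by
            apply add_le_add
            · apply mul_le_mul habs_f (by rw [abs_sub_comm]; exact hdiff_b) (abs_nonneg _)
                (norm_nonneg _)
            · apply mul_le_mul (by rw [abs_sub_comm]; exact hdiff_a) habs_b (abs_nonneg _)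
                hδpos.le
        _ ≤ δ + δ := by linarith [hfδ']
        _ = 2 * δ := by ring
    -- eventual closeness
    rw [Metric.tendsto_atTop] at hH
    obtain ⟨N, hN⟩ := hH δ hδpos
    refine ⟨N, fun n hn => ?_⟩
    have h3 := hN n hn
    rw [Real.dist_eq] at h3 ⊢
    have tri : |(∫ ω, a ω * b (T^[n] ω) ∂P) - (∫ ω, a ω ∂P) * ∫ ω, b ω ∂P|
        ≤ |(∫ ω, a ω * b (T^[n] ω) ∂P) - ∫ ω, f ω * g (T^[n] ω) ∂P|
          + |(∫ ω, f ω * g (T^[n] ω) ∂P) - (∫ ω, f ω ∂P) * ∫ ω, g ω ∂P|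
          + |(∫ ω, f ω ∂P) * (∫ ω, g ω ∂P) - (∫ ω, a ω ∂P) * ∫ ω, b ω ∂P| := by
      have := abs_sub_le (∫ ω, a ω * b (T^[n] ω) ∂P)
        ((∫ ω, f ω ∂P) * ∫ ω, g ω ∂P) ((∫ ω, a ω ∂P) * ∫ ω, b ω ∂P)
      have h2 := abs_sub_le (∫ ω, a ω * b (T^[n] ω) ∂P)
        (∫ ω, f ω * g (T^[n] ω) ∂P) ((∫ ω, f ω ∂P) * ∫ ω, g ω ∂P)
      linarith
    have : |(∫ ω, a ω * b (T^[n] ω) ∂P) - (∫ ω, a ω ∂P) * ∫ ω, b ω ∂P|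
        < 2 * δ + δ + 2 * δ := by
      have b1 := bound1 n
      linarith [bound2]
    calc |(∫ ω, a ω * b (T^[n] ω) ∂P) - (∫ ω, a ω ∂P) * ∫ ω, b ω ∂P|
        < 2 * δ + δ + 2 * δ := this
      _ ≤ ε := by rw [hδ_def]; linarith
end

section
/- Let Ω be a Polish space with Borel σ-field B, P a Borel probability measure on Ω, and T : Ω → Ω a measurable map preserving P (i.e. P ∘ T^{-1} = P). Then (1/N) ∑_{k=0}^{N-1} P(A ∩ T^{-k}B) → P(A)·P(B) for all A, B ∈ B (the Cesàro characterization of ergodicity of T) if and only if the averaged measures (1/N) ∑_{k=0}^{N-1} P ∘ (T^0, T^k)^{-1} (probability measures on Ω × Ω, where P ∘ (T^0, T^k)^{-1} is the law of ω ↦ (ω, T^k ω) under P) converge weakly to the product measure P ⊗ P as N → ∞. -/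
open MeasureTheory Filter Topology Set
open scoped NNReal ENNReal

set_option linter.unusedSectionVars false

namespace ErgodicCesaroAux

variable {Ω : Type*} [TopologicalSpace Ω] [PolishSpace Ω] [MeasurableSpace Ω] [BorelSpace Ω]
  (P : Measure Ω) [IsProbabilityMeasure P] (T : Ω → Ω)

noncomputable def ECmu (N : ℕ) : Measure (Ω × Ω) :=
  ((N : ENNReal)⁻¹) • ∑ k ∈ Finset.range N, P.map (fun ω => (ω, T^[k] ω))

variable {P T}

lemma pair_measurable (hT : Measurable T) (k : ℕ) :
    Measurable (fun ω : Ω => (ω, T^[k] ω)) :=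
  measurable_id.prodMk (hT.iterate k)

lemma ECmu_apply (hT : Measurable T) (N : ℕ) {E : Set (Ω × Ω)} (hE : MeasurableSet E) :
    ECmu P T N E
      = ((N : ENNReal))⁻¹ * ∑ k ∈ Finset.range N, P ((fun ω => (ω, T^[k] ω)) ⁻¹' E) := by
  simp only [ECmu, Measure.smul_apply, smul_eq_mul]
  congr 1
  rw [Measure.finset_sum_apply]
  exact Finset.sum_congr rfl fun k _ => Measure.map_apply (pair_measurable hT k) hE

lemma preimage_pair_prod (k : ℕ) (A B : Set Ω) :
    (fun ω : Ω => (ω, T^[k] ω)) ⁻¹' (A ×ˢ B) = A ∩ T^[k] ⁻¹' B := by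
  ext ω; simp [Set.mem_prod, Set.mem_inter_iff]

lemma ECmu_rect (hT : Measurable T) (N : ℕ) {A B : Set Ω}
    (hA : MeasurableSet A) (hB : MeasurableSet B) :
    ECmu P T N (A ×ˢ B)
      = (∑ k ∈ Finset.range N, P (A ∩ T^[k] ⁻¹' B)) / (N : ENNReal) := by
  rw [ECmu_apply hT N (hA.prod hB), ENNReal.div_eq_inv_mul]
  simp only [preimage_pair_prod]

lemma ECmu_fst (hT : Measurable T) {N : ℕ} (hN : N ≠ 0) {A : Set Ω} (hA : MeasurableSet A) :
    ECmu P T N (A ×ˢ (univ : Set Ω)) = P A := by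
  rw [ECmu_apply hT N (hA.prod MeasurableSet.univ)]
  have h : ∀ k ∈ Finset.range N, P ((fun ω : Ω => (ω, T^[k] ω)) ⁻¹' (A ×ˢ univ)) = P A := by
    intro k _; rw [preimage_pair_prod]; simp
  rw [Finset.sum_congr rfl h, Finset.sum_const, Finset.card_range, nsmul_eq_mul, ← mul_assoc,
    ENNReal.inv_mul_cancel (by exact_mod_cast hN) (ENNReal.natCast_ne_top N), one_mul]

lemma ECmu_snd (hT : Measurable T) (hpres : P.map T = P) {N : ℕ} (hN : N ≠ 0)
    {B : Set Ω} (hB : MeasurableSet B) :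
    ECmu P T N ((univ : Set Ω) ×ˢ B) = P B := by
  have hiter : ∀ k : ℕ, P (T^[k] ⁻¹' B) = P B := fun k => by
    conv_rhs => rw [← (MeasurePreserving.iterate ⟨hT, hpres⟩ k).map_eq]
    rw [Measure.map_apply (hT.iterate k) hB]
  rw [ECmu_apply hT N (MeasurableSet.univ.prod hB)]
  have h : ∀ k ∈ Finset.range N, P ((fun ω : Ω => (ω, T^[k] ω)) ⁻¹' (univ ×ˢ B)) = P B := by
    intro k _; rw [preimage_pair_prod, univ_inter, hiter]
  rw [Finset.sum_congr rfl h, Finset.sum_const, Finset.card_range, nsmul_eq_mul, ← mul_assoc,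
    ENNReal.inv_mul_cancel (by exact_mod_cast hN) (ENNReal.natCast_ne_top N), one_mul]

lemma ECmu_univ (hT : Measurable T) {N : ℕ} (hN : N ≠ 0) :
    ECmu P T N (univ : Set (Ω × Ω)) = 1 := by
  rw [← Set.univ_prod_univ, ECmu_fst hT hN MeasurableSet.univ, measure_univ]

lemma ECmu_le_one (hT : Measurable T) (N : ℕ) (E : Set (Ω × Ω)) :
    ECmu P T N E ≤ 1 := by
  rcases Nat.eq_zero_or_pos N with h | h
  · subst h
    simp [ECmu]
  · exact (measure_mono (subset_univ E)).trans (ECmu_univ hT h.ne').le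

lemma ECmu_ne_top (hT : Measurable T) (N : ℕ) (E : Set (Ω × Ω)) :
    ECmu P T N E ≠ ⊤ :=
  ((ECmu_le_one hT N E).trans_lt ENNReal.one_lt_top).ne

end ErgodicCesaroAux
namespace ErgodicCesaroAux

variable {Ω : Type*} [TopologicalSpace Ω] [PolishSpace Ω] [MeasurableSpace Ω] [BorelSpace Ω]
  {P : Measure Ω} [IsProbabilityMeasure P] {T : Ω → Ω}

lemma ECmu_tendsto_rect (hT : Measurable T)
    (hLHS : ∀ A B : Set Ω, MeasurableSet A → MeasurableSet B →
      Tendsto (fun N : ℕ => (∑ k ∈ Finset.range N, P (A ∩ T^[k] ⁻¹' B)) / (N : ENNReal))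
        atTop (𝓝 (P A * P B)))
    {A B : Set Ω} (hA : MeasurableSet A) (hB : MeasurableSet B) :
    Tendsto (fun N => ECmu P T N (A ×ˢ B)) atTop (𝓝 ((P.prod P) (A ×ˢ B))) := by
  rw [Measure.prod_prod]
  simpa only [← ECmu_rect hT _ hA hB] using hLHS A B hA hB

lemma ECmu_tendsto_biUnion (hT : Measurable T)
    (hLHS : ∀ A B : Set Ω, MeasurableSet A → MeasurableSet B →
      Tendsto (fun N : ℕ => (∑ k ∈ Finset.range N, P (A ∩ T^[k] ⁻¹' B)) / (N : ENNReal))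
        atTop (𝓝 (P A * P B))) :
    ∀ (n : ℕ) (U V : ℕ → Set Ω), (∀ i, MeasurableSet (U i)) → (∀ i, MeasurableSet (V i)) →
      Tendsto (fun N => ECmu P T N (⋃ i ∈ Finset.range n, U i ×ˢ V i)) atTop
        (𝓝 ((P.prod P) (⋃ i ∈ Finset.range n, U i ×ˢ V i))) := by
  intro n
  induction n with
  | zero =>
    intro U V hU hV
    simp only [Finset.range_zero, Finset.notMem_empty, Set.iUnion_of_empty,
      Set.iUnion_empty, measure_empty]
    exact tendsto_const_nhds
  | succ n ih =>
    intro U V hU hV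
    have hS := ih U V hU hV
    have hR := ECmu_tendsto_rect hT hLHS (hU n) (hV n)
    have hSR := ih (fun i => U i ∩ U n) (fun i => V i ∩ V n)
      (fun i => (hU i).inter (hU n)) (fun i => (hV i).inter (hV n))
    set S : Set (Ω × Ω) := ⋃ i ∈ Finset.range n, U i ×ˢ V i with hSdef
    set R : Set (Ω × Ω) := U n ×ˢ V n with hRdef
    have hRm : MeasurableSet R := (hU n).prod (hV n)
    have hinter : (⋃ i ∈ Finset.range n, (U i ∩ U n) ×ˢ (V i ∩ V n)) = S ∩ R := by
      rw [hSdef, Set.iUnion₂_inter]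
      exact Set.iUnion₂_congr fun i _ => Set.prod_inter_prod.symm
    rw [hinter] at hSR
    have hset : (⋃ i ∈ Finset.range (n + 1), U i ×ˢ V i) = S ∪ R := by
      rw [Finset.range_add_one, Finset.set_biUnion_insert, union_comm]
    rw [hset]
    have key : ∀ N, ECmu P T N (S ∪ R)
        = (ECmu P T N S + ECmu P T N R) - ECmu P T N (S ∩ R) := fun N =>
      ENNReal.eq_sub_of_add_eq (ECmu_ne_top hT N _) (measure_union_add_inter S hRm)
    have keyP : (P.prod P) (S ∪ R) = ((P.prod P) S + (P.prod P) R) - (P.prod P) (S ∩ R) :=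
      ENNReal.eq_sub_of_add_eq (measure_ne_top _ _) (measure_union_add_inter S hRm)
    rw [keyP]
    simp only [key]
    exact ENNReal.Tendsto.sub (hS.add hR) hSR (Or.inr (measure_ne_top _ _))

lemma prodP_le_liminf_ECmu_of_isOpen (hT : Measurable T)
    (hLHS : ∀ A B : Set Ω, MeasurableSet A → MeasurableSet B →
      Tendsto (fun N : ℕ => (∑ k ∈ Finset.range N, P (A ∩ T^[k] ⁻¹' B)) / (N : ENNReal))
        atTop (𝓝 (P A * P B)))
    {G : Set (Ω × Ω)} (hG : IsOpen G) :
    (P.prod P) G ≤ atTop.liminf (fun N => ECmu P T N G) := by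
  classical
  have hbasis : TopologicalSpace.IsTopologicalBasis
      (Set.image2 (· ×ˢ ·) (TopologicalSpace.countableBasis Ω) (TopologicalSpace.countableBasis Ω)) :=
    (TopologicalSpace.isBasis_countableBasis Ω).prod (TopologicalSpace.isBasis_countableBasis Ω)
  set 𝒞 : Set (Set (Ω × Ω)) :=
    {s ∈ Set.image2 (· ×ˢ ·) (TopologicalSpace.countableBasis Ω)
      (TopologicalSpace.countableBasis Ω) | s ⊆ G} with h𝒞
  have hGeq : G = ⋃₀ 𝒞 := hbasis.open_eq_sUnion' hG
  have hcount : 𝒞.Countable :=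
    ((TopologicalSpace.countable_countableBasis Ω).image2
      (TopologicalSpace.countable_countableBasis Ω) _).mono (sep_subset _ _)
  rcases eq_empty_or_nonempty 𝒞 with hemp | hne
  · rw [hGeq, hemp]
    simp
  · obtain ⟨f, hf⟩ := hcount.exists_eq_range hne
    have hfmem : ∀ n, f n ∈ 𝒞 := fun n => by rw [hf]; exact mem_range_self n
    have hex : ∀ n, ∃ u v, u ∈ TopologicalSpace.countableBasis Ω ∧
        v ∈ TopologicalSpace.countableBasis Ω ∧ u ×ˢ v = f n := by
      intro n
      rcases (hfmem n).1 with ⟨u, hu, v, hv, huv⟩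
      exact ⟨u, v, hu, hv, huv⟩
    choose U V hU hV hUV using hex
    have hUm : ∀ i, MeasurableSet (U i) :=
      fun i => (TopologicalSpace.isOpen_of_mem_countableBasis (hU i)).measurableSet
    have hVm : ∀ i, MeasurableSet (V i) :=
      fun i => (TopologicalSpace.isOpen_of_mem_countableBasis (hV i)).measurableSet
    have hGiU : G = ⋃ n, U n ×ˢ V n := by
      rw [hGeq, hf, sUnion_range]
      exact iUnion_congr fun n => (hUV n).symm
    have hsubG : ∀ n, (⋃ i ∈ Finset.range (n + 1), U i ×ˢ V i) ⊆ G := by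
      intro n
      refine Set.iUnion₂_subset fun i _ => ?_
      rw [hUV i]
      exact (hfmem i).2
    have hle : ∀ n, (P.prod P) (⋃ i ∈ Finset.range (n + 1), U i ×ˢ V i)
        ≤ atTop.liminf (fun N => ECmu P T N G) := by
      intro n
      rw [← (ECmu_tendsto_biUnion hT hLHS (n + 1) U V hUm hVm).liminf_eq]
      exact Filter.liminf_le_liminf (.of_forall fun N => measure_mono (hsubG n))
    have hacc : ∀ n, Set.accumulate (fun n => U n ×ˢ V n) n
        = ⋃ i ∈ Finset.range (n + 1), U i ×ˢ V i := by
      intro n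
      ext x
      simp only [Set.mem_accumulate, Set.mem_iUnion, Finset.mem_range, Nat.lt_succ_iff,
        Set.mem_prod]
      tauto
    have htend := tendsto_measure_iUnion_accumulate (μ := P.prod P)
      (f := fun n => U n ×ˢ V n)
    rw [← hGiU] at htend
    refine le_of_tendsto htend (.of_forall fun n => ?_)
    rw [hacc n]
    exact hle n

end ErgodicCesaroAux
namespace ErgodicCesaroAux

variable {Ω : Type*} [TopologicalSpace Ω] [PolishSpace Ω] [MeasurableSpace Ω] [BorelSpace Ω]
  {P : Measure Ω} [IsProbabilityMeasure P] {T : Ω → Ω}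

noncomputable def piseq (P : Measure Ω) [IsProbabilityMeasure P] (T : Ω → Ω)
    (hT : Measurable T) (N : ℕ) : ProbabilityMeasure (Ω × Ω) :=
  if h : N = 0 then ⟨P.prod P, inferInstance⟩
  else ⟨ECmu P T N, ⟨ECmu_univ hT h⟩⟩

lemma piseq_coe (hT : Measurable T) {N : ℕ} (hN : N ≠ 0) :
    (piseq P T hT N : Measure (Ω × Ω)) = ECmu P T N := by
  simp [piseq, hN]

noncomputable def Ppm (P : Measure Ω) [IsProbabilityMeasure P] :
    ProbabilityMeasure (Ω × Ω) := ⟨P.prod P, inferInstance⟩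

lemma nnreal_le_liminf {f : ℕ → ℝ≥0} (hb : ∀ i, f i ≤ 1) {x : ℝ≥0}
    (h : (x : ℝ≥0∞) ≤ atTop.liminf (fun i => (f i : ℝ≥0∞))) :
    x ≤ atTop.liminf f := by
  have aux : ((atTop.liminf f : ℝ≥0) : ℝ≥0∞) = atTop.liminf (fun i => (f i : ℝ≥0∞)) := by
    refine Monotone.map_liminf_of_continuousAt (F := atTop) ENNReal.coe_mono f
      ENNReal.continuous_coe.continuousAt ?_ ?_
    · exact IsBoundedUnder.isCoboundedUnder_ge ⟨1, eventually_map.mpr (.of_forall hb)⟩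
    · exact ⟨0, eventually_map.mpr (.of_forall fun i => zero_le)⟩
  exact_mod_cast h.trans_eq aux.symm

lemma tendsto_piseq (hT : Measurable T)
    (hLHS : ∀ A B : Set Ω, MeasurableSet A → MeasurableSet B →
      Tendsto (fun N : ℕ => (∑ k ∈ Finset.range N, P (A ∩ T^[k] ⁻¹' B)) / (N : ENNReal))
        atTop (𝓝 (P A * P B))) :
    Tendsto (piseq P T hT) atTop (𝓝 (Ppm P)) := by
  apply MeasureTheory.tendsto_of_forall_isOpen_le_liminf
  intro G hG
  have hENN : (P.prod P) G ≤ atTop.liminf (fun N => ECmu P T N G) :=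
    prodP_le_liminf_ECmu_of_isOpen hT hLHS hG
  have hcongr : atTop.liminf (fun N => ECmu P T N G)
      = atTop.liminf (fun N => ((piseq P T hT N G : ℝ≥0) : ℝ≥0∞)) := by
    apply Filter.liminf_congr
    filter_upwards [eventually_ge_atTop 1] with N hN
    rw [ProbabilityMeasure.ennreal_coeFn_eq_coeFn_toMeasure,
      piseq_coe hT (Nat.one_le_iff_ne_zero.mp hN)]
  apply nnreal_le_liminf (fun i => ProbabilityMeasure.apply_le_one _ _)
  rw [← hcongr]
  calc ((Ppm P) G : ℝ≥0∞) = (P.prod P) G := by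
        rw [ProbabilityMeasure.ennreal_coeFn_eq_coeFn_toMeasure]; rfl
    _ ≤ _ := hENN

lemma tendsto_piseq_iff_rhs (hT : Measurable T) :
    Tendsto (piseq P T hT) atTop (𝓝 (Ppm P)) ↔
      (∀ f : BoundedContinuousFunction (Ω × Ω) ℝ,
        Tendsto
          (fun N : ℕ => ∫ p, f p
            ∂(((N : ENNReal)⁻¹) •
              ∑ k ∈ Finset.range N, P.map (fun ω => (ω, T^[k] ω))))
          atTop (𝓝 (∫ p, f p ∂(P.prod P)))) := by
  rw [ProbabilityMeasure.tendsto_iff_forall_integral_tendsto]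
  refine forall_congr' fun f => ?_
  apply Filter.tendsto_congr'
  filter_upwards [eventually_ge_atTop 1] with N hN
  rw [piseq_coe hT (Nat.one_le_iff_ne_zero.mp hN)]
  rfl

end ErgodicCesaroAux
namespace ErgodicCesaroAux

variable {Ω : Type*} [TopologicalSpace Ω] [PolishSpace Ω] [MeasurableSpace Ω] [BorelSpace Ω]
  {P : Measure Ω} [IsProbabilityMeasure P] {T : Ω → Ω}

lemma reverse (hT : Measurable T) (hpres : P.map T = P)
    (h : Tendsto (piseq P T hT) atTop (𝓝 (Ppm P)))
    {A B : Set Ω} (hA : MeasurableSet A) (hB : MeasurableSet B) :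
    Tendsto (fun N : ℕ => (∑ k ∈ Finset.range N, P (A ∩ T^[k] ⁻¹' B)) / (N : ENNReal))
      atTop (𝓝 (P A * P B)) := by
  have hfun : (fun N : ℕ => (∑ k ∈ Finset.range N, P (A ∩ T^[k] ⁻¹' B)) / (N : ENNReal))
      = fun N => ECmu P T N (A ×ˢ B) := funext fun N => (ECmu_rect hT N hA hB).symm
  rw [hfun, ← Measure.prod_prod (μ := P) (ν := P)]
  set a : ℝ≥0∞ := (P.prod P) (A ×ˢ B) with ha
  rw [ENNReal.tendsto_nhds (measure_ne_top _ _)]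
  intro ε hε
  -- small epsilon
  set ε' : ℝ≥0∞ := min (ε / 3) 1 with hε'
  have hε'0 : 0 < ε' := lt_min (ENNReal.div_pos hε.ne' (by norm_num)) one_pos
  have hε'top : ε' ≠ ⊤ := (min_le_right _ _).trans_lt ENNReal.one_lt_top |>.ne
  have h3ε : ε' + ε' + ε' ≤ ε := by
    have h1 : ε' + ε' + ε' = 3 * ε' := by ring
    have h2 : (3 : ℝ≥0∞) * ε' ≤ 3 * (ε / 3) :=
      mul_le_mul_right (min_le_left _ _) _
    rw [h1]
    exact h2.trans (ENNReal.mul_div_le)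
  -- regular approximations
  obtain ⟨FA, hFAsub, hFAc, hFAe⟩ := hA.exists_isClosed_diff_lt (measure_ne_top P A) hε'0.ne'
  obtain ⟨FB, hFBsub, hFBc, hFBe⟩ := hB.exists_isClosed_diff_lt (measure_ne_top P B) hε'0.ne'
  obtain ⟨UA, hUAsub, hUAo, -, hUAe⟩ := hA.exists_isOpen_diff_lt (measure_ne_top P A) hε'0.ne'
  obtain ⟨UB, hUBsub, hUBo, -, hUBe⟩ := hB.exists_isOpen_diff_lt (measure_ne_top P B) hε'0.ne'
  -- portmanteau bounds
  have hclosed : atTop.limsup (fun N => (piseq P T hT N : Measure (Ω × Ω)) (FA ×ˢ FB))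
      ≤ (P.prod P) (FA ×ˢ FB) :=
    ProbabilityMeasure.limsup_measure_closed_le_of_tendsto h (hFAc.prod hFBc)
  have hopen : (P.prod P) (UA ×ˢ UB)
      ≤ atTop.liminf (fun N => (piseq P T hT N : Measure (Ω × Ω)) (UA ×ˢ UB)) := by
    refine le_measure_liminf_of_limsup_measure_compl_le
      ((hUAo.prod hUBo).measurableSet) ?_
    exact ProbabilityMeasure.limsup_measure_closed_le_of_tendsto h
      (hUAo.prod hUBo).isClosed_compl
  -- eventual bounds
  have E1 : ∀ᶠ N in atTop,
      (piseq P T hT N : Measure (Ω × Ω)) (FA ×ˢ FB) < (P.prod P) (FA ×ˢ FB) + ε' := by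
    refine Filter.eventually_lt_of_limsup_lt (hclosed.trans_lt ?_)
    exact ENNReal.lt_add_right (measure_ne_top _ _) hε'0.ne'
  have E2 : ∀ᶠ N in atTop,
      (P.prod P) (UA ×ˢ UB) ≤ (piseq P T hT N : Measure (Ω × Ω)) (UA ×ˢ UB) + ε' := by
    by_cases hc : (P.prod P) (UA ×ˢ UB) ≤ ε'
    · exact .of_forall fun N => hc.trans le_add_self
    · push_neg at hc
      have hlt : (P.prod P) (UA ×ˢ UB) - ε' < (P.prod P) (UA ×ˢ UB) :=
        ENNReal.sub_lt_self (measure_ne_top _ _) (pos_of_gt hc).ne' hε'0.ne'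
      have := Filter.eventually_lt_of_lt_liminf (hlt.trans_le hopen)
      filter_upwards [this] with N hN
      have := (ENNReal.sub_lt_iff_lt_right hε'top hc.le).mp hN
      exact this.le
  filter_upwards [E1, E2, eventually_ge_atTop 1] with N hN1 hN2 hN
  have hNne : N ≠ 0 := Nat.one_le_iff_ne_zero.mp hN
  rw [piseq_coe hT hNne] at hN1 hN2
  have hmA : MeasurableSet (A \ FA) := hA.diff hFAc.measurableSet
  have hmB : MeasurableSet (B \ FB) := hB.diff hFBc.measurableSet
  have hmUA : MeasurableSet (UA \ A) := hUAo.measurableSet.diff hA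
  have hmUB : MeasurableSet (UB \ B) := hUBo.measurableSet.diff hB
  constructor
  · -- a - ε ≤ ECmu N (A ×ˢ B)
    rw [tsub_le_iff_right]
    have hsub : UA ×ˢ UB ⊆ (A ×ˢ B) ∪ ((UA \ A) ×ˢ (univ : Set Ω))
        ∪ ((univ : Set Ω) ×ˢ (UB \ B)) := by
      rintro ⟨x, y⟩ ⟨hx, hy⟩
      by_cases hxA : x ∈ A
      · by_cases hyB : y ∈ B
        · exact Or.inl (Or.inl ⟨hxA, hyB⟩)
        · exact Or.inr ⟨mem_univ x, hy, hyB⟩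
      · exact Or.inl (Or.inr ⟨⟨hx, hxA⟩, mem_univ y⟩)
    have hmono : (P.prod P) (A ×ˢ B) ≤ (P.prod P) (UA ×ˢ UB) :=
      measure_mono (Set.prod_mono hUAsub hUBsub)
    calc a ≤ (P.prod P) (UA ×ˢ UB) := hmono
      _ ≤ ECmu P T N (UA ×ˢ UB) + ε' := hN2
      _ ≤ (ECmu P T N (A ×ˢ B) + ECmu P T N ((UA \ A) ×ˢ (univ : Set Ω))
            + ECmu P T N ((univ : Set Ω) ×ˢ (UB \ B))) + ε' := by
          gcongr
          refine (measure_mono hsub).trans ?_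
          exact (measure_union_le _ _).trans (add_le_add_left (measure_union_le _ _) _)
      _ = (ECmu P T N (A ×ˢ B) + P (UA \ A) + P (UB \ B)) + ε' := by
          rw [ECmu_fst hT hNne hmUA, ECmu_snd hT hpres hNne hmUB]
      _ ≤ ECmu P T N (A ×ˢ B) + ε' + ε' + ε' := by
          gcongr
      _ = ECmu P T N (A ×ˢ B) + (ε' + ε' + ε') := by ring
      _ ≤ ECmu P T N (A ×ˢ B) + ε := add_le_add_right h3ε _
  · -- ECmu N (A ×ˢ B) ≤ a + ε
    have hsub : A ×ˢ B ⊆ (FA ×ˢ FB) ∪ ((A \ FA) ×ˢ (univ : Set Ω))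
        ∪ ((univ : Set Ω) ×ˢ (B \ FB)) := by
      rintro ⟨x, y⟩ ⟨hx, hy⟩
      by_cases hxF : x ∈ FA
      · by_cases hyF : y ∈ FB
        · exact Or.inl (Or.inl ⟨hxF, hyF⟩)
        · exact Or.inr ⟨mem_univ x, hy, hyF⟩
      · exact Or.inl (Or.inr ⟨⟨hx, hxF⟩, mem_univ y⟩)
    have hmono : (P.prod P) (FA ×ˢ FB) ≤ a :=
      measure_mono (Set.prod_mono hFAsub hFBsub)
    calc ECmu P T N (A ×ˢ B)
        ≤ ECmu P T N (FA ×ˢ FB) + ECmu P T N ((A \ FA) ×ˢ (univ : Set Ω))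
            + ECmu P T N ((univ : Set Ω) ×ˢ (B \ FB)) := by
          refine (measure_mono hsub).trans ?_
          exact (measure_union_le _ _).trans (add_le_add_left (measure_union_le _ _) _)
      _ = ECmu P T N (FA ×ˢ FB) + P (A \ FA) + P (B \ FB) := by
          rw [ECmu_fst hT hNne hmA, ECmu_snd hT hpres hNne hmB]
      _ ≤ ((P.prod P) (FA ×ˢ FB) + ε') + ε' + ε' := by
          gcongr
      _ ≤ (a + ε') + ε' + ε' := by gcongr
      _ = a + (ε' + ε' + ε') := by ring
      _ ≤ a + ε := add_le_add_right h3ε _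

end ErgodicCesaroAux
open ErgodicCesaroAux in
/-- Let `Ω` be a Polish space with Borel σ-field, `P` a Borel probability
measure, and `T : Ω → Ω` a measurable map preserving `P`. Then the Cesàro averages
`(1/N) ∑_{k<N} P (A ∩ T⁻ᵏ B)` converge to `P A * P B` for all Borel `A, B` (the Cesàro
characterization of ergodicity) if and only if the averaged measures
`(1/N) ∑_{k<N} P ∘ (id, T^k)⁻¹` converge weakly to the product measure `P ⊗ P`. -/
theorem ergodic_cesaro_iff_weak_convergence
    {Ω : Type*} [TopologicalSpace Ω] [PolishSpace Ω] [MeasurableSpace Ω] [BorelSpace Ω]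
    (P : Measure Ω) [IsProbabilityMeasure P]
    (T : Ω → Ω) (hT : Measurable T) (hpres : P.map T = P) :
    (∀ A B : Set Ω, MeasurableSet A → MeasurableSet B →
        Tendsto (fun N : ℕ => (∑ k ∈ Finset.range N, P (A ∩ T^[k] ⁻¹' B)) / (N : ENNReal))
          atTop (𝓝 (P A * P B))) ↔
      (∀ f : BoundedContinuousFunction (Ω × Ω) ℝ,
        Tendsto
          (fun N : ℕ => ∫ p, f p
            ∂(((N : ENNReal)⁻¹) •
              ∑ k ∈ Finset.range N, P.map (fun ω => (ω, T^[k] ω))))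
          atTop (𝓝 (∫ p, f p ∂(P.prod P)))) := by
  constructor
  · intro hLHS
    exact (tendsto_piseq_iff_rhs hT).mp (tendsto_piseq hT hLHS)
  · intro hRHS
    intro A B hA hB
    exact reverse hT hpres ((tendsto_piseq_iff_rhs hT).mpr hRHS) hA hB
end

section
/- Let (Ω, F, P) be a probability space and H : Ω → {closed subsets of [0,∞)} a random closed set whose graph {(t, ω) ∈ [0,∞) × Ω : t ∈ H(ω)} is product-measurable. Assume the law of H is invariant under scaling, in the sense that for every c > 0 and every t > 0, P(t ∈ H and H is porous at t) = P(ct ∈ H and H is porous at ct) (this holds in particular whenever cH has the same distribution as H for all c > 0). Then the event {1 ∉ H} is contained in the event {H is porous at 1}, and P({H is porous at 1} \ {1 ∉ H}) = 0; that is, the events {1 ∉ H} and {H is porous at 1} coincide up to a P-null set. -/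
open MeasureTheory Filter Topology

/-- `gapLength H x ε` is the supremum of the lengths of the intervals contained in
`(x - ε, x + ε) \ H`. -/
noncomputable def gapLength (H : Set ℝ) (x ε : ℝ) : ℝ :=
  sSup {l : ℝ | ∃ a b : ℝ, l = b - a ∧ Set.Ioo a b ⊆ Set.Ioo (x - ε) (x + ε) \ H}

/-- A set `H ⊆ ℝ` is porous at `x` if `limsup_{ε → 0+} gapLength H x ε / ε > 0`. -/
def PorousAt (H : Set ℝ) (x : ℝ) : Prop :=
  0 < Filter.limsup (fun ε => gapLength H x ε / ε) (𝓝[>] (0 : ℝ))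

lemma gapSet_zero_mem (H : Set ℝ) (x ε : ℝ) :
    (0:ℝ) ∈ {l : ℝ | ∃ a b : ℝ, l = b - a ∧ Set.Ioo a b ⊆ Set.Ioo (x - ε) (x + ε) \ H} :=
  ⟨0, 0, by ring, by simp⟩

lemma gapSet_bddAbove (H : Set ℝ) (x ε : ℝ) :
    BddAbove {l : ℝ | ∃ a b : ℝ, l = b - a ∧ Set.Ioo a b ⊆ Set.Ioo (x - ε) (x + ε) \ H} := by
  refine ⟨max 0 (2*ε), ?_⟩
  rintro l ⟨a, b, rfl, h⟩
  rcases lt_or_ge a b with hab | hab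
  · have h2 : Set.Ioo a b ⊆ Set.Ioo (x-ε) (x+ε) := fun y hy => (h hy).1
    have h3 := (Set.Ioo_subset_Ioo_iff hab).1 h2
    exact le_max_of_le_right (by linarith [h3.1, h3.2])
  · exact le_max_of_le_left (by linarith)

lemma gapLength_nonneg (H : Set ℝ) (x ε : ℝ) : 0 ≤ gapLength H x ε :=
  le_csSup (gapSet_bddAbove H x ε) (gapSet_zero_mem H x ε)

lemma gapLength_le (H : Set ℝ) (x ε : ℝ) (hε : 0 ≤ ε) : gapLength H x ε ≤ 2 * ε := by
  apply Real.sSup_le _ (by linarith)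
  rintro l ⟨a, b, rfl, h⟩
  rcases lt_or_ge a b with hab | hab
  · have h2 : Set.Ioo a b ⊆ Set.Ioo (x-ε) (x+ε) := fun y hy => (h hy).1
    have h3 := (Set.Ioo_subset_Ioo_iff hab).1 h2
    linarith [h3.1, h3.2]
  · linarith

lemma gapLength_eq_of_disjoint (H : Set ℝ) (x ε : ℝ) (hε : 0 < ε)
    (hdisj : Set.Ioo (x - ε) (x + ε) ∩ H = ∅) : gapLength H x ε = 2 * ε := by
  refine le_antisymm (gapLength_le H x ε hε.le) ?_
  apply le_csSup (gapSet_bddAbove H x ε)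
  refine ⟨x - ε, x + ε, by ring, fun y hy => ⟨hy, fun hmem => ?_⟩⟩
  exact absurd (Set.mem_inter hy hmem) (by simp [hdisj])

/-- If `H` is porous at `t`, then arbitrarily close to scale `0` some rational window
around `t` misses a fixed proportion of `H` in measure. -/
lemma exists_porous_bound {H₀ : Set ℝ} {t : ℝ} (hp : PorousAt H₀ t) :
    ∃ m : ℕ, ∀ n : ℕ, ∃ q : ℚ, (0 < (q:ℝ) ∧ (q:ℝ) < 1/((n:ℝ)+1)) ∧
      volume (H₀ ∩ Set.Ioo (t - (q:ℝ)) (t + (q:ℝ))) ≤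
        ENNReal.ofReal ((1 - 1/((m:ℝ)+1)) * (2*(q:ℝ))) := by
  have hev0 : ∀ᶠ ε in 𝓝[>] (0:ℝ), (0:ℝ) ≤ gapLength H₀ t ε / ε := by
    filter_upwards [self_mem_nhdsWithin] with ε hε
    exact div_nonneg (gapLength_nonneg H₀ t ε) (le_of_lt hε)
  have hco : IsCoboundedUnder (· ≤ ·) (𝓝[>] (0:ℝ)) (fun ε => gapLength H₀ t ε / ε) :=
    isCoboundedUnder_le_of_eventually_le _ hev0
  set L := Filter.limsup (fun ε => gapLength H₀ t ε / ε) (𝓝[>] (0:ℝ)) with hL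
  have hLpos : 0 < L := hp
  set c : ℝ := min L 1 / 2 with hc
  have hcpos : 0 < c := by
    have : 0 < min L 1 := lt_min hLpos one_pos
    positivity
  have hc1 : c ≤ 1/2 := by
    have : min L 1 ≤ 1 := min_le_right _ _
    simp only [hc]; linarith
  have hcL : c < L := by
    have h1 : min L 1 ≤ L := min_le_left _ _
    have : c ≤ L / 2 := by simp only [hc]; linarith
    linarith
  have hfreq : ∃ᶠ ε in 𝓝[>] (0:ℝ), c < gapLength H₀ t ε / ε :=
    Filter.frequently_lt_of_lt_limsup hco hcL
  obtain ⟨m, hm⟩ := exists_nat_one_div_lt (show (0:ℝ) < c/4 by positivity)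
  refine ⟨m, fun n => ?_⟩
  have hd : (0:ℝ) < 1/(2*((n:ℝ)+1)) := by positivity
  have hev : ∀ᶠ ε in 𝓝[>] (0:ℝ), ε ∈ Set.Ioo 0 (1/(2*((n:ℝ)+1))) :=
    Filter.eventually_of_mem (Ioo_mem_nhdsGT_of_mem ⟨le_refl 0, hd⟩) fun _ h => h
  obtain ⟨ε, hgt, hε0, hεd⟩ := (hfreq.and_eventually hev).exists
  have hgap : c * ε < gapLength H₀ t ε := by
    rw [lt_div_iff₀ hε0] at hgt; exact hgt
  obtain ⟨l, hlmem, hl⟩ := exists_lt_of_lt_csSup ⟨0, gapSet_zero_mem H₀ t ε⟩ hgap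
  obtain ⟨a, b, rfl, hsub⟩ := hlmem
  have hab : a < b := by nlinarith
  have hsub1 : Set.Ioo a b ⊆ Set.Ioo (t-ε) (t+ε) := fun y hy => (hsub hy).1
  have hb1 := (Set.Ioo_subset_Ioo_iff hab).1 hsub1
  -- volume of H in the ε-window is at most (2-c)ε
  have hdisj : Disjoint (H₀ ∩ Set.Ioo (t-ε) (t+ε)) (Set.Ioo a b) := by
    rw [Set.disjoint_left]
    rintro y ⟨hyH, _⟩ hy2
    exact (hsub hy2).2 hyH
  have hwin : volume (H₀ ∩ Set.Ioo (t-ε) (t+ε)) + ENNReal.ofReal (b - a)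
      ≤ ENNReal.ofReal (2*ε) := by
    have h1 : volume (H₀ ∩ Set.Ioo (t-ε) (t+ε)) + volume (Set.Ioo a b)
        = volume ((H₀ ∩ Set.Ioo (t-ε) (t+ε)) ∪ Set.Ioo a b) :=
      (measure_union hdisj measurableSet_Ioo).symm
    have h2 : (H₀ ∩ Set.Ioo (t-ε) (t+ε)) ∪ Set.Ioo a b ⊆ Set.Ioo (t-ε) (t+ε) :=
      Set.union_subset Set.inter_subset_right hsub1
    calc volume (H₀ ∩ Set.Ioo (t-ε) (t+ε)) + ENNReal.ofReal (b - a)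
        = volume ((H₀ ∩ Set.Ioo (t-ε) (t+ε)) ∪ Set.Ioo a b) := by
          rw [← Real.volume_Ioo (a := a) (b := b)]; exact h1
      _ ≤ volume (Set.Ioo (t-ε) (t+ε)) := measure_mono h2
      _ = ENNReal.ofReal (2*ε) := by rw [Real.volume_Ioo]; ring_nf
  have hwin2 : volume (H₀ ∩ Set.Ioo (t-ε) (t+ε)) ≤ ENNReal.ofReal (2*ε - c*ε) := by
    have hba : ENNReal.ofReal (c*ε) ≤ ENNReal.ofReal (b - a) := ENNReal.ofReal_le_ofReal hl.le
    have h3 : volume (H₀ ∩ Set.Ioo (t-ε) (t+ε)) + ENNReal.ofReal (c*ε)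
        ≤ ENNReal.ofReal (2*ε) := le_trans (add_le_add le_rfl hba) hwin
    have h4 := ENNReal.le_sub_of_add_le_right ENNReal.ofReal_ne_top h3
    rwa [← ENNReal.ofReal_sub _ (by positivity : (0:ℝ) ≤ c*ε)] at h4
  -- choose a rational q slightly bigger than ε
  have hmin : ε < min (2*ε) (1/((n:ℝ)+1)) := by
    apply lt_min (by linarith)
    have h5 : 1/(2*((n:ℝ)+1)) < 1/((n:ℝ)+1) := by
      apply div_lt_div_of_pos_left one_pos (by positivity)
      nlinarith [Nat.cast_nonneg (α := ℝ) n]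
    linarith [hεd]
  obtain ⟨q, hq1, hq2⟩ := exists_rat_btwn hmin
  have hq0 : 0 < (q:ℝ) := hε0.trans hq1
  have hq2e : (q:ℝ) < 2*ε := (lt_min_iff.1 hq2).1
  refine ⟨q, ⟨hq0, (lt_min_iff.1 hq2).2⟩, ?_⟩
  -- cover the q-window
  have hcover : H₀ ∩ Set.Ioo (t-(q:ℝ)) (t+(q:ℝ)) ⊆
      (H₀ ∩ Set.Ioo (t-ε) (t+ε)) ∪ (Set.Ioc (t-(q:ℝ)) (t-ε) ∪ Set.Ico (t+ε) (t+(q:ℝ))) := by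
    rintro y ⟨hyH, hy1, hy2⟩
    rcases le_or_gt y (t-ε) with h | h
    · exact Or.inr (Or.inl ⟨hy1, h⟩)
    rcases lt_or_ge y (t+ε) with h' | h'
    · exact Or.inl ⟨hyH, h, h'⟩
    · exact Or.inr (Or.inr ⟨h', hy2⟩)
  have hchain : volume (H₀ ∩ Set.Ioo (t-(q:ℝ)) (t+(q:ℝ)))
      ≤ ENNReal.ofReal (2*ε - c*ε) + (ENNReal.ofReal ((q:ℝ) - ε) + ENNReal.ofReal ((q:ℝ) - ε)) := by
    calc volume (H₀ ∩ Set.Ioo (t-(q:ℝ)) (t+(q:ℝ)))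
        ≤ volume ((H₀ ∩ Set.Ioo (t-ε) (t+ε)) ∪ (Set.Ioc (t-(q:ℝ)) (t-ε) ∪ Set.Ico (t+ε) (t+(q:ℝ)))) :=
          measure_mono hcover
      _ ≤ volume (H₀ ∩ Set.Ioo (t-ε) (t+ε)) + volume (Set.Ioc (t-(q:ℝ)) (t-ε) ∪ Set.Ico (t+ε) (t+(q:ℝ))) :=
          measure_union_le _ _
      _ ≤ volume (H₀ ∩ Set.Ioo (t-ε) (t+ε)) + (volume (Set.Ioc (t-(q:ℝ)) (t-ε)) + volume (Set.Ico (t+ε) (t+(q:ℝ)))) :=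
          add_le_add le_rfl (measure_union_le _ _)
      _ ≤ ENNReal.ofReal (2*ε - c*ε) + (ENNReal.ofReal ((q:ℝ) - ε) + ENNReal.ofReal ((q:ℝ) - ε)) := by
          apply add_le_add hwin2
          rw [Real.volume_Ioc, Real.volume_Ico]
          apply add_le_add <;> apply ENNReal.ofReal_le_ofReal <;> linarith
  refine hchain.trans ?_
  rw [← ENNReal.ofReal_add (by linarith) (by linarith),
    ← ENNReal.ofReal_add (by nlinarith) (by linarith)]
  apply ENNReal.ofReal_le_ofReal
  have hm4 : 1/((m:ℝ)+1) * (2*(q:ℝ)) ≤ c * ε := by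
    have h6 : 1/((m:ℝ)+1) * (2*(q:ℝ)) ≤ (c/4) * (2*(q:ℝ)) := by
      apply mul_le_mul_of_nonneg_right hm.le (by positivity)
    nlinarith
  nlinarith

/-- The density-point criterion: the bound from `exists_porous_bound` contradicts Lebesgue
density `1`. -/
lemma not_tendsto_of_bound {H₀ : Set ℝ} {t : ℝ} (m : ℕ)
    (h : ∀ n : ℕ, ∃ q : ℚ, (0 < (q:ℝ) ∧ (q:ℝ) < 1/((n:ℝ)+1)) ∧
      volume (H₀ ∩ Set.Ioo (t - (q:ℝ)) (t + (q:ℝ))) ≤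
        ENNReal.ofReal ((1 - 1/((m:ℝ)+1)) * (2*(q:ℝ)))) :
    ¬ Tendsto (fun r => volume (H₀ ∩ Metric.closedBall t r) / volume (Metric.closedBall t r))
      (𝓝[>] (0:ℝ)) (𝓝 1) := by
  intro hT
  have hm1 : (0:ℝ) < 1/((m:ℝ)+1) := by positivity
  have hm1' : 1/((m:ℝ)+1) ≤ 1 := by
    rw [div_le_one (by positivity)]
    linarith [Nat.cast_nonneg (α := ℝ) m]
  have hlt1 : ENNReal.ofReal (1 - 1/((m:ℝ)+1)) < 1 := by
    rw [ENNReal.ofReal_lt_one]; linarith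
  have hev := hT.eventually (eventually_gt_nhds hlt1)
  obtain ⟨u, hu, huI⟩ := mem_nhdsGT_iff_exists_Ioo_subset.1 hev
  obtain ⟨k, hk⟩ := exists_nat_one_div_lt (show (0:ℝ) < u from hu)
  obtain ⟨q, ⟨hq0, hqk⟩, hqle⟩ := h k
  have hgt := huI ⟨hq0, hqk.trans hk⟩
  -- but the ratio at q is at most ofReal (1 - 1/(m+1))
  have hIcc : Metric.closedBall t (q:ℝ) = Set.Icc (t-(q:ℝ)) (t+(q:ℝ)) := Real.closedBall_eq_Icc
  have hpair : volume ({t-(q:ℝ), t+(q:ℝ)} : Set ℝ) = 0 :=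
    ((Set.finite_singleton _).insert _).measure_zero volume
  have hvol_le : volume (H₀ ∩ Metric.closedBall t (q:ℝ))
      ≤ volume (H₀ ∩ Set.Ioo (t-(q:ℝ)) (t+(q:ℝ))) := by
    rw [hIcc]
    have hcov : H₀ ∩ Set.Icc (t-(q:ℝ)) (t+(q:ℝ))
        ⊆ (H₀ ∩ Set.Ioo (t-(q:ℝ)) (t+(q:ℝ))) ∪ ({t-(q:ℝ), t+(q:ℝ)} : Set ℝ) := by
      rintro y ⟨hyH, hy1, hy2⟩
      rcases eq_or_lt_of_le hy1 with h | h
      · exact Or.inr (Or.inl h.symm)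
      rcases eq_or_lt_of_le hy2 with h' | h'
      · exact Or.inr (Or.inr h')
      · exact Or.inl ⟨hyH, h, h'⟩
    calc volume (H₀ ∩ Set.Icc (t-(q:ℝ)) (t+(q:ℝ)))
        ≤ volume (H₀ ∩ Set.Ioo (t-(q:ℝ)) (t+(q:ℝ))) + volume ({t-(q:ℝ), t+(q:ℝ)} : Set ℝ) :=
          (measure_mono hcov).trans (measure_union_le _ _)
      _ = volume (H₀ ∩ Set.Ioo (t-(q:ℝ)) (t+(q:ℝ))) := by rw [hpair, add_zero]
  have hvb : volume (Metric.closedBall t (q:ℝ)) = ENNReal.ofReal (2*(q:ℝ)) := by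
    rw [hIcc, Real.volume_Icc]; ring_nf
  have hratio : volume (H₀ ∩ Metric.closedBall t (q:ℝ)) / volume (Metric.closedBall t (q:ℝ))
      ≤ ENNReal.ofReal (1 - 1/((m:ℝ)+1)) := by
    rw [hvb]
    calc volume (H₀ ∩ Metric.closedBall t (q:ℝ)) / ENNReal.ofReal (2*(q:ℝ))
        ≤ ENNReal.ofReal ((1 - 1/((m:ℝ)+1)) * (2*(q:ℝ))) / ENNReal.ofReal (2*(q:ℝ)) :=
          ENNReal.div_le_div_right (hvol_le.trans hqle) _
      _ = ENNReal.ofReal (1 - 1/((m:ℝ)+1)) := by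
          rw [ENNReal.ofReal_mul (by linarith), mul_div_assoc,
            ENNReal.div_self (by simp [hq0]; exact_mod_cast hq0) ENNReal.ofReal_ne_top, mul_one]
  exact absurd hgt (not_lt.2 hratio)

/-- Any subset of a closed set consisting of non-density-points is Lebesgue null. -/
lemma null_of_nondensity {H₀ : Set ℝ} (hcl : IsClosed H₀) {A : Set ℝ}
    (hA : ∀ t ∈ A, t ∈ H₀ ∧
      ¬ Tendsto (fun r => volume (H₀ ∩ Metric.closedBall t r) / volume (Metric.closedBall t r))
        (𝓝[>] (0:ℝ)) (𝓝 1)) :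
    volume A = 0 := by
  have hdense := Besicovitch.ae_tendsto_measure_inter_div volume H₀
  have h0 : volume.restrict H₀
      {t : ℝ | ¬ Tendsto (fun r => volume (H₀ ∩ Metric.closedBall t r) / volume (Metric.closedBall t r))
        (𝓝[>] (0:ℝ)) (𝓝 1)} = 0 := ae_iff.1 hdense
  have h1 : volume.restrict H₀ A = 0 :=
    measure_mono_null (fun t ht => (hA t ht).2) h0
  rw [Measure.restrict_apply' hcl.measurableSet] at h1
  rwa [Set.inter_eq_self_of_subset_left (fun t ht => (hA t ht).1)] at h1

/-- Let `H` be a random closed subset of `[0, ∞)` with product-measurable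
graph, whose law is scaling invariant in the sense that
`P (t ∈ H ∧ H porous at t) = P (c*t ∈ H ∧ H porous at c*t)` for all `c, t > 0`.
Then `{1 ∉ H} ⊆ {H is porous at 1}` and `P ({H is porous at 1} \ {1 ∉ H}) = 0`,
i.e. the two events coincide up to a `P`-null set. -/
theorem notMem_iff_porousAt_one_ae
    {Ω : Type*} [MeasurableSpace Ω] (P : Measure Ω) [IsProbabilityMeasure P]
    (H : Ω → Set ℝ)
    (hclosed : ∀ ω, IsClosed (H ω)) (hsub : ∀ ω, H ω ⊆ Set.Ici (0 : ℝ))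
    (hgraph : MeasurableSet {p : ℝ × Ω | p.1 ∈ H p.2})
    (hscale : ∀ c : ℝ, 0 < c → ∀ t : ℝ, 0 < t →
      P {ω | t ∈ H ω ∧ PorousAt (H ω) t} = P {ω | c * t ∈ H ω ∧ PorousAt (H ω) (c * t)}) :
    {ω | 1 ∉ H ω} ⊆ {ω | PorousAt (H ω) 1} ∧
      P ({ω | PorousAt (H ω) 1} \ {ω | 1 ∉ H ω}) = 0 := by
  constructor
  · -- easy inclusion: if `1 ∉ H ω` the whole window is a gap
    intro ω h1
    have hopen : IsOpen (H ω)ᶜ := (hclosed ω).isOpen_compl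
    obtain ⟨δ, hδ, hball⟩ := Metric.isOpen_iff.1 hopen 1 h1
    rw [Real.ball_eq_Ioo] at hball
    have hev : (fun ε => gapLength (H ω) 1 ε / ε) =ᶠ[𝓝[>] (0:ℝ)] fun _ => 2 := by
      filter_upwards [Filter.eventually_of_mem (Ioo_mem_nhdsGT_of_mem ⟨le_refl 0, hδ⟩)
        fun x hx => hx] with ε hε
      have hdisj : Set.Ioo (1-ε) (1+ε) ∩ H ω = ∅ := by
        apply Set.eq_empty_of_forall_notMem
        rintro y ⟨hy1, hy2⟩
        exact hball (Set.Ioo_subset_Ioo (by linarith [hε.2]) (by linarith [hε.2]) hy1) hy2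
      rw [gapLength_eq_of_disjoint (H ω) 1 ε hε.1 hdisj, mul_div_assoc,
        div_self (ne_of_gt hε.1), mul_one]
    show 0 < Filter.limsup (fun ε => gapLength (H ω) 1 ε / ε) (𝓝[>] (0:ℝ))
    rw [Filter.limsup_congr hev, Filter.limsup_const]
    norm_num
  · -- the measure-zero part
    set B : Set (ℝ × Ω) := ⋃ m : ℕ, ⋂ n : ℕ, ⋃ q : ℚ, ⋃ (_ : 0 < (q:ℝ) ∧ (q:ℝ) < 1/((n:ℝ)+1)),
        {p : ℝ × Ω | volume (H p.2 ∩ Set.Ioo (p.1 - (q:ℝ)) (p.1 + (q:ℝ)))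
          ≤ ENNReal.ofReal ((1 - 1/((m:ℝ)+1)) * (2*(q:ℝ)))} with hBdef
    have hGm : ∀ q : ℝ, Measurable (fun p : ℝ × Ω => volume (H p.2 ∩ Set.Ioo (p.1 - q) (p.1 + q))) := by
      intro q
      have hT : MeasurableSet {x : (ℝ × Ω) × ℝ |
          x.2 ∈ H x.1.2 ∧ x.1.1 - q < x.2 ∧ x.2 < x.1.1 + q} := by
        have h1 : MeasurableSet {x : (ℝ × Ω) × ℝ | x.2 ∈ H x.1.2} :=
          hgraph.preimage (measurable_snd.prodMk measurable_fst.snd)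
        have h2 : MeasurableSet {x : (ℝ × Ω) × ℝ | x.1.1 - q < x.2} :=
          measurableSet_lt (measurable_fst.fst.sub measurable_const) measurable_snd
        have h3 : MeasurableSet {x : (ℝ × Ω) × ℝ | x.2 < x.1.1 + q} :=
          measurableSet_lt measurable_snd (measurable_fst.fst.add measurable_const)
        exact h1.inter (h2.inter h3)
      set T : Set ((ℝ × Ω) × ℝ) :=
        {x : (ℝ × Ω) × ℝ | x.2 ∈ H x.1.2 ∧ x.1.1 - q < x.2 ∧ x.2 < x.1.1 + q} with hTdef
      have key : (fun p : ℝ × Ω => volume (H p.2 ∩ Set.Ioo (p.1 - q) (p.1 + q)))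
          = fun p => ∫⁻ (s : ℝ), Set.indicator T (fun _ => (1:ENNReal)) (p, s) ∂volume := by
        funext p
        have hs : MeasurableSet (H p.2 ∩ Set.Ioo (p.1-q) (p.1+q)) :=
          ((hclosed p.2).measurableSet).inter measurableSet_Ioo
        rw [← lintegral_indicator_one hs]
        refine lintegral_congr fun a => ?_
        by_cases hmem : a ∈ H p.2 ∧ p.1 - q < a ∧ a < p.1 + q
        · rw [Set.indicator_of_mem
              (show a ∈ H p.2 ∩ Set.Ioo (p.1 - q) (p.1 + q) from ⟨hmem.1, hmem.2.1, hmem.2.2⟩),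
            Set.indicator_of_mem (show (p, a) ∈ T from hmem)]
          rfl
        · rw [Set.indicator_of_notMem
              (show a ∉ H p.2 ∩ Set.Ioo (p.1 - q) (p.1 + q) from fun h => hmem ⟨h.1, h.2.1, h.2.2⟩),
            Set.indicator_of_notMem (show (p, a) ∉ T from hmem)]
      rw [key]
      exact Measurable.lintegral_prod_right (measurable_const.indicator hT)
    have hBm : MeasurableSet B := by
      apply MeasurableSet.iUnion; intro m
      apply MeasurableSet.iInter; intro n
      apply MeasurableSet.iUnion; intro q
      apply MeasurableSet.iUnion; intro _
      exact measurableSet_le (hGm q) measurable_const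
    set S : Set (ℝ × Ω) := B ∩ {p : ℝ × Ω | p.1 ∈ H p.2} with hSdef
    have hS : MeasurableSet S := hBm.inter hgraph
    have hsec : ∀ ω, volume ((fun t => (t, ω)) ⁻¹' S) = 0 := by
      intro ω
      apply null_of_nondensity (hclosed ω)
      intro t ht
      obtain ⟨htB, htH⟩ := ht
      refine ⟨htH, ?_⟩
      simp only [hBdef, Set.mem_iUnion, Set.mem_iInter, Set.mem_setOf_eq] at htB
      obtain ⟨m, hm⟩ := htB
      apply not_tendsto_of_bound m
      intro n
      obtain ⟨q, hq1, hq2⟩ := hm n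
      exact ⟨q, hq1, hq2⟩
    have hprod : (volume.prod P) S = 0 := by
      rw [Measure.prod_apply_symm hS]
      rw [lintegral_congr hsec]
      simp
    rw [Measure.prod_apply hS] at hprod
    have hae : ∀ᵐ t : ℝ, P (Prod.mk t ⁻¹' S) = 0 := by
      have := (lintegral_eq_zero_iff (measurable_measure_prodMk_left hS)).1 hprod
      filter_upwards [this] with t ht using ht
    have hfreq : ∃ᶠ t : ℝ in ae volume, t ∈ Set.Ioi (0:ℝ) := by
      rw [frequently_ae_mem_iff]
      simp [Real.volume_Ioi]
    obtain ⟨t, htpos, htnull⟩ := (hfreq.and_eventually hae).exists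
    have hsubev : {ω | PorousAt (H ω) 1} \ {ω | 1 ∉ H ω}
        = {ω | (1:ℝ) ∈ H ω ∧ PorousAt (H ω) 1} := by
      ext ω; simp [Set.mem_diff, not_not, and_comm]
    rw [hsubev, hscale t htpos 1 one_pos]
    apply measure_mono_null _ htnull
    intro ω hω
    obtain ⟨h1, h2⟩ := hω
    rw [mul_one] at h1 h2
    refine ⟨?_, h1⟩
    show (t, ω) ∈ B
    obtain ⟨m, hm⟩ := exists_porous_bound h2
    simp only [hBdef, Set.mem_iUnion, Set.mem_iInter, Set.mem_setOf_eq]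
    exact ⟨m, fun n => by obtain ⟨q, hq1, hq2⟩ := hm n; exact ⟨q, hq1, hq2⟩⟩
end

section
/- Let (Ω, F, P) be a probability space and H : Ω → {closed subsets of [0,∞)} a random closed set whose graph {(t, ω) ∈ [0,∞) × Ω : t ∈ H(ω)} is product-measurable, and such that for every c > 0 and every t > 0, P(t ∈ H and H is porous at t) = P(ct ∈ H and H is porous at ct) (scaling invariance of the law of H). If H is porous at 1 almost surely, then P(1 ∉ H) = 1. -/
open MeasureTheory Filter Topology
open scoped ENNReal

/-- The discretized density ratio of `s` near `t` at scale `1/n`. -/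
noncomputable def densRatio (s : Set ℝ) (t : ℝ) (n : ℕ) : ℝ≥0∞ :=
  volume (s ∩ Set.Ioo (t - 1/(n:ℝ)) (t + 1/(n:ℝ))) / ENNReal.ofReal (2/(n:ℝ))

lemma porous_frequently {s : Set ℝ} {t : ℝ} (h : PorousAt s t) :
    ∃ δ : ℝ, 0 < δ ∧ δ ≤ 1 ∧ ∃ᶠ ε in 𝓝[>] (0:ℝ), δ ≤ gapLength s t ε / ε := by
  set f := fun ε => gapLength s t ε / ε with hf
  have hL0 : 0 < limsup f (𝓝[>] (0:ℝ)) := h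
  set L := limsup f (𝓝[>] (0:ℝ)) with hL
  refine ⟨min (L/2) 1, by positivity, min_le_right _ _, ?_⟩
  by_contra hc
  rw [Filter.not_frequently] at hc
  have hev : ∀ᶠ ε in 𝓝[>] (0:ℝ), f ε ≤ L/2 := by
    filter_upwards [hc] with ε hε
    have : f ε < min (L/2) 1 := not_le.1 hε
    exact le_of_lt (lt_of_lt_of_le this (min_le_left _ _))
  have hmem : L/2 ∈ {a : ℝ | ∀ᶠ ε in 𝓝[>] (0:ℝ), f ε ≤ a} := hev
  have hLdef : L = sInf {a : ℝ | ∀ᶠ ε in 𝓝[>] (0:ℝ), f ε ≤ a} := Filter.limsup_eq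
  by_cases hbdd : BddBelow {a : ℝ | ∀ᶠ ε in 𝓝[>] (0:ℝ), f ε ≤ a}
  · have : L ≤ L/2 := hLdef ▸ csInf_le hbdd hmem
    linarith
  · have : L = 0 := hLdef.trans (Real.sInf_of_not_bddBelow hbdd)
    linarith

lemma exists_gap {s : Set ℝ} {t ε δ : ℝ} (hε : 0 < ε) (hδ : 0 < δ)
    (h : δ ≤ gapLength s t ε / ε) :
    ∃ a b : ℝ, δ * ε / 2 < b - a ∧ Set.Ioo a b ⊆ Set.Ioo (t - ε) (t + ε) \ s := by
  have hge : δ * ε ≤ gapLength s t ε := (le_div_iff₀ hε).1 h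
  by_contra hc
  push_neg at hc
  have hne : (0:ℝ) ∈ {l : ℝ | ∃ a b : ℝ, l = b - a ∧
      Set.Ioo a b ⊆ Set.Ioo (t - ε) (t + ε) \ s} := by
    exact ⟨0, 0, by norm_num, by simp⟩
  have hub : gapLength s t ε ≤ δ * ε / 2 := by
    apply csSup_le ⟨0, hne⟩
    rintro l ⟨a, b, rfl, hsub⟩
    by_contra h'
    exact absurd hsub (hc a b (not_le.1 h'))
  nlinarith

lemma liminf_lt_one_of_porous {s : Set ℝ} {t : ℝ} (h : PorousAt s t) :
    Filter.liminf (densRatio s t) atTop < 1 := by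
  obtain ⟨δ, hδ0, hδ1, hfreq⟩ := porous_frequently h
  have key : ∃ᶠ n in atTop, densRatio s t n ≤ ENNReal.ofReal (1 - δ/8) := by
    rw [Filter.frequently_atTop]
    intro n₀
    have hb : (0:ℝ) < 1/(2*((n₀:ℝ)+1)) := by positivity
    have hIoo : Set.Ioo (0:ℝ) (1/(2*((n₀:ℝ)+1))) ∈ 𝓝[>] (0:ℝ) :=
      Ioo_mem_nhdsGT_of_mem ⟨le_refl _, hb⟩
    obtain ⟨ε, hδε, hε0, hεlt⟩ :=
      (hfreq.and_eventually (eventually_of_mem hIoo (fun x hx => hx))).exists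
    set n := ⌊1/ε⌋₊ with hn
    have h2n₀ : 2*((n₀:ℝ)+1) ≤ 1/ε := by
      rw [le_div_iff₀ hε0]
      have := (lt_div_iff₀ (show (0:ℝ) < 2*((n₀:ℝ)+1) by positivity)).1 hεlt
      nlinarith
    have h1ε : 1 ≤ 1/ε := by nlinarith
    have hn1 : 1 ≤ n := Nat.le_floor (by exact_mod_cast h1ε)
    have hnR : (1:ℝ) ≤ (n:ℝ) := by exact_mod_cast hn1
    have hfl : (n:ℝ) ≤ 1/ε := Nat.floor_le (by positivity)
    have hnε : ε ≤ 1/(n:ℝ) := by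
      rw [le_div_iff₀ (by linarith : (0:ℝ) < (n:ℝ))]
      have := (le_div_iff₀ hε0).1 hfl
      nlinarith
    have hεn1 : 1/((n:ℝ)+1) < ε := by
      have h1 : 1/ε < (n:ℝ)+1 := by exact_mod_cast Nat.lt_floor_add_one (1/ε)
      rw [div_lt_iff₀ (by linarith : (0:ℝ) < (n:ℝ)+1)]
      have := (div_lt_iff₀ hε0).1 h1
      nlinarith
    have hn₀n : n₀ ≤ n := by
      have : (n₀:ℝ) + 1 < (n:ℝ) + 1 := by
        have h1 : 1/ε < (n:ℝ)+1 := by exact_mod_cast Nat.lt_floor_add_one (1/ε)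
        nlinarith
      have : (n₀:ℝ) < (n:ℝ) := by linarith
      exact le_of_lt (by exact_mod_cast this)
    refine ⟨n, hn₀n, ?_⟩
    obtain ⟨a, b, hab, hsub⟩ := exists_gap hε0 hδ0 hδε
    have hIsub : Set.Ioo a b ⊆ Set.Ioo (t - 1/(n:ℝ)) (t + 1/(n:ℝ)) \ s := by
      refine hsub.trans (Set.diff_subset_diff_left ?_)
      exact Set.Ioo_subset_Ioo (by linarith) (by linarith)
    have hdisj : Disjoint (s ∩ Set.Ioo (t - 1/(n:ℝ)) (t + 1/(n:ℝ))) (Set.Ioo a b) := by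
      rw [Set.disjoint_left]
      rintro x ⟨hxs, -⟩ hxab
      exact (hIsub hxab).2 hxs
    have hvol : volume (s ∩ Set.Ioo (t - 1/(n:ℝ)) (t + 1/(n:ℝ))) + ENNReal.ofReal (b - a)
        ≤ ENNReal.ofReal (2/(n:ℝ)) := by
      have h1 : volume (s ∩ Set.Ioo (t - 1/(n:ℝ)) (t + 1/(n:ℝ))) + volume (Set.Ioo a b)
          = volume ((s ∩ Set.Ioo (t - 1/(n:ℝ)) (t + 1/(n:ℝ))) ∪ Set.Ioo a b) :=
        (measure_union hdisj measurableSet_Ioo).symm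
      have h2 : (s ∩ Set.Ioo (t - 1/(n:ℝ)) (t + 1/(n:ℝ))) ∪ Set.Ioo a b
          ⊆ Set.Ioo (t - 1/(n:ℝ)) (t + 1/(n:ℝ)) :=
        Set.union_subset Set.inter_subset_right (hIsub.trans Set.diff_subset)
      calc volume (s ∩ Set.Ioo (t - 1/(n:ℝ)) (t + 1/(n:ℝ))) + ENNReal.ofReal (b - a)
          = volume (s ∩ Set.Ioo (t - 1/(n:ℝ)) (t + 1/(n:ℝ))) + volume (Set.Ioo a b) := by
            rw [Real.volume_Ioo]
        _ = volume ((s ∩ Set.Ioo (t - 1/(n:ℝ)) (t + 1/(n:ℝ))) ∪ Set.Ioo a b) := h1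
        _ ≤ volume (Set.Ioo (t - 1/(n:ℝ)) (t + 1/(n:ℝ))) := measure_mono h2
        _ = ENNReal.ofReal (2/(n:ℝ)) := by rw [Real.volume_Ioo]; ring_nf
    have hba : δ/(4*(n:ℝ)) ≤ b - a := by
      have h1 : δ/(2*((n:ℝ)+1)) < δ * ε / 2 := by
        have hlt : δ * (1/((n:ℝ)+1)) < δ * ε := mul_lt_mul_of_pos_left hεn1 hδ0
        have heq : δ/(2*((n:ℝ)+1)) = δ * (1/((n:ℝ)+1))/2 := by
          field_simp
        linarith
      have h2 : δ/(4*(n:ℝ)) ≤ δ/(2*((n:ℝ)+1)) := by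
        apply div_le_div_of_nonneg_left (le_of_lt hδ0) (by positivity)
        linarith
      linarith
    have hvol2 : volume (s ∩ Set.Ioo (t - 1/(n:ℝ)) (t + 1/(n:ℝ)))
        ≤ ENNReal.ofReal ((1 - δ/8) * (2/(n:ℝ))) := by
      calc volume (s ∩ Set.Ioo (t - 1/(n:ℝ)) (t + 1/(n:ℝ)))
          ≤ ENNReal.ofReal (2/(n:ℝ)) - ENNReal.ofReal (b - a) :=
            ENNReal.le_sub_of_add_le_right ENNReal.ofReal_ne_top hvol
        _ ≤ ENNReal.ofReal (2/(n:ℝ)) - ENNReal.ofReal (δ/(4*(n:ℝ))) :=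
            tsub_le_tsub le_rfl (ENNReal.ofReal_le_ofReal hba)
        _ = ENNReal.ofReal (2/(n:ℝ) - δ/(4*(n:ℝ))) :=
            (ENNReal.ofReal_sub _ (by positivity)).symm
        _ = ENNReal.ofReal ((1 - δ/8) * (2/(n:ℝ))) := by
            congr 1
            field_simp
            ring
    have hd0 : ENNReal.ofReal (2/(n:ℝ)) ≠ 0 := by
      simp only [ne_eq, ENNReal.ofReal_eq_zero, not_le]
      positivity
    calc densRatio s t n
        ≤ ENNReal.ofReal ((1 - δ/8) * (2/(n:ℝ))) / ENNReal.ofReal (2/(n:ℝ)) :=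
          ENNReal.div_le_div_right hvol2 _
      _ = ENNReal.ofReal (1 - δ/8) * (ENNReal.ofReal (2/(n:ℝ)) / ENNReal.ofReal (2/(n:ℝ))) := by
          rw [ENNReal.ofReal_mul (by linarith : (0:ℝ) ≤ 1 - δ/8), mul_div_assoc]
      _ = ENNReal.ofReal (1 - δ/8) := by
          rw [ENNReal.div_self hd0 ENNReal.ofReal_ne_top, mul_one]
  exact lt_of_le_of_lt (Filter.liminf_le_of_frequently_le' key)
    (ENNReal.ofReal_lt_one.2 (by linarith))

lemma vol_inter_closedBall (s : Set ℝ) (t r : ℝ) :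
    volume (s ∩ Metric.closedBall t r) = volume (s ∩ Set.Ioo (t - r) (t + r)) := by
  apply le_antisymm
  · rw [Real.closedBall_eq_Icc]
    have hsub : s ∩ Set.Icc (t - r) (t + r)
        ⊆ (s ∩ Set.Ioo (t - r) (t + r)) ∪ ({t - r, t + r} : Set ℝ) := by
      rintro x ⟨hxs, hx1, hx2⟩
      by_cases h1 : x = t - r
      · exact Or.inr (Or.inl h1)
      by_cases h2 : x = t + r
      · exact Or.inr (Or.inr h2)
      · exact Or.inl ⟨hxs, lt_of_le_of_ne hx1 (Ne.symm h1), lt_of_le_of_ne hx2 h2⟩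
    calc volume (s ∩ Set.Icc (t - r) (t + r))
        ≤ volume (s ∩ Set.Ioo (t - r) (t + r)) + volume ({t - r, t + r} : Set ℝ) :=
          le_trans (measure_mono hsub) (measure_union_le _ _)
      _ = volume (s ∩ Set.Ioo (t - r) (t + r)) := by
          have hz : volume ({t - r, t + r} : Set ℝ) = 0 :=
            Set.Finite.measure_zero ((Set.finite_singleton _).insert _) volume
          rw [hz, add_zero]
  · apply measure_mono
    apply Set.inter_subset_inter_right
    rw [Real.closedBall_eq_Icc]
    exact Set.Ioo_subset_Icc_self

lemma slice_null {s : Set ℝ} (hs : MeasurableSet s) :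
    volume {t : ℝ | t ∈ s ∧ Filter.liminf (densRatio s t) atTop < 1} = 0 := by
  have hae := Besicovitch.ae_tendsto_measure_inter_div_of_measurableSet (volume : Measure ℝ) hs
  rw [ae_iff] at hae
  apply measure_mono_null _ hae
  rintro t ⟨hts, hlim⟩
  simp only [Set.mem_setOf_eq]
  intro hT
  have hind : s.indicator (1 : ℝ → ℝ≥0∞) t = 1 := Set.indicator_of_mem hts 1
  rw [hind] at hT
  have hseq : Tendsto (fun n : ℕ => (1:ℝ)/n) atTop (𝓝[>] (0:ℝ)) := by
    apply tendsto_nhdsWithin_of_tendsto_nhds_of_eventually_within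
    · exact tendsto_one_div_atTop_nhds_zero_nat
    · filter_upwards [eventually_gt_atTop 0] with n hn
      exact Set.mem_Ioi.2 (by positivity)
  have hT2 := hT.comp hseq
  have heq : (fun n : ℕ => volume (s ∩ Metric.closedBall t (1/n)) /
      volume (Metric.closedBall t (1/n))) =ᶠ[atTop] densRatio s t := by
    filter_upwards [eventually_ge_atTop 1] with n hn
    have hn0 : (0:ℝ) < (n:ℝ) := by exact_mod_cast hn
    rw [vol_inter_closedBall, Real.volume_closedBall, mul_one_div]
    rfl
  have hlimeq : Filter.liminf (densRatio s t) atTop = 1 :=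
    ((hT2.congr' heq)).liminf_eq
  rw [hlimeq] at hlim
  exact lt_irrefl _ hlim

/-- Let `H` be a random closed subset of `[0, ∞)` with product-measurable
graph, whose law is scaling invariant in the sense that
`P (t ∈ H ∧ H porous at t) = P (c*t ∈ H ∧ H porous at c*t)` for all `c, t > 0`.
If `H` is porous at `1` almost surely, then `P (1 ∉ H) = 1`. -/
theorem prob_one_notMem_of_porousAt_one
    {Ω : Type*} [MeasurableSpace Ω] (P : Measure Ω) [IsProbabilityMeasure P]
    (H : Ω → Set ℝ)
    (hclosed : ∀ ω, IsClosed (H ω)) (hsub : ∀ ω, H ω ⊆ Set.Ici (0 : ℝ))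
    (hgraph : MeasurableSet {p : ℝ × Ω | p.1 ∈ H p.2})
    (hscale : ∀ c : ℝ, 0 < c → ∀ t : ℝ, 0 < t →
      P {ω | t ∈ H ω ∧ PorousAt (H ω) t} = P {ω | c * t ∈ H ω ∧ PorousAt (H ω) (c * t)})
    (hporous : ∀ᵐ ω ∂P, PorousAt (H ω) 1) :
    P {ω | 1 ∉ H ω} = 1 := by
  classical
  -- The key joint-measurable "bad" set
  set N : Set (ℝ × Ω) := {p : ℝ × Ω | p.1 ∈ Set.Ioo (1:ℝ) 2 ∧ p.1 ∈ H p.2 ∧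
    Filter.liminf (densRatio (H p.2) p.1) atTop < 1} with hN
  -- measurability
  have hmeasvol : ∀ n : ℕ, Measurable (fun p : ℝ × Ω =>
      volume (H p.2 ∩ Set.Ioo (p.1 - 1/n) (p.1 + 1/n))) := by
    intro n
    have hS : MeasurableSet {q : (ℝ × Ω) × ℝ |
        q.2 ∈ H q.1.2 ∧ q.1.1 - 1/n < q.2 ∧ q.2 < q.1.1 + 1/n} := by
      apply MeasurableSet.inter
      · exact (measurable_snd.prodMk measurable_fst.snd) hgraph
      apply MeasurableSet.inter
      · exact measurableSet_lt (measurable_fst.fst.sub measurable_const) measurable_snd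
      · exact measurableSet_lt measurable_snd (measurable_fst.fst.add measurable_const)
    have hm := measurable_measure_prodMk_left (ν := (volume : Measure ℝ)) hS
    have h2 : ∀ p : ℝ × Ω, Prod.mk p ⁻¹' {q : (ℝ × Ω) × ℝ |
        q.2 ∈ H q.1.2 ∧ q.1.1 - 1/n < q.2 ∧ q.2 < q.1.1 + 1/n}
        = H p.2 ∩ Set.Ioo (p.1 - 1/n) (p.1 + 1/n) := by
      intro p
      ext x
      simp only [Set.mem_preimage, Set.mem_setOf_eq, Set.mem_inter_iff, Set.mem_Ioo]
    simp only [h2] at hm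
    exact hm
  have hg : Measurable (fun p : ℝ × Ω =>
      Filter.liminf (densRatio (H p.2) p.1) atTop) := by
    apply Measurable.liminf
    intro n
    unfold densRatio
    exact (hmeasvol n).div_const _
  have hmeasN : MeasurableSet N := by
    have h1 : N = ({p : ℝ × Ω | p.1 ∈ Set.Ioo (1:ℝ) 2} ∩ {p : ℝ × Ω | p.1 ∈ H p.2})
        ∩ {p : ℝ × Ω | Filter.liminf (densRatio (H p.2) p.1) atTop < 1} := by
      ext p
      simp only [hN, Set.mem_setOf_eq, Set.mem_inter_iff]
      tauto
    rw [h1]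
    exact ((measurable_fst measurableSet_Ioo).inter hgraph).inter
      (measurableSet_lt hg measurable_const)
  -- the product measure of N is zero, by slicing in ω
  have hzero : (volume.prod P) N = 0 := by
    rw [Measure.prod_apply_symm hmeasN]
    have : ∀ ω, volume ((fun t => (t, ω)) ⁻¹' N) = 0 := by
      intro ω
      apply measure_mono_null _ (slice_null (hclosed ω).measurableSet)
      rintro t ⟨-, ht2, ht3⟩
      exact ⟨ht2, ht3⟩
    simp only [this, lintegral_zero]
  -- the product measure of N bounds P A from below
  set A := {ω | 1 ∈ H ω ∧ PorousAt (H ω) 1} with hA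
  have hPA : P A = 0 := by
    have hineq : ∀ t ∈ Set.Ioo (1:ℝ) 2, P A ≤ P (Prod.mk t ⁻¹' N) := by
      intro t ht
      have hscaled := hscale t (by linarith [ht.1]) 1 one_pos
      rw [mul_one] at hscaled
      rw [hA, hscaled]
      apply measure_mono
      rintro ω ⟨hω1, hω2⟩
      exact ⟨ht, hω1, liminf_lt_one_of_porous hω2⟩
    have hlow : P A * volume (Set.Ioo (1:ℝ) 2) ≤ (volume.prod P) N := by
      rw [Measure.prod_apply hmeasN]
      calc P A * volume (Set.Ioo (1:ℝ) 2)
          = ∫⁻ t, (Set.Ioo (1:ℝ) 2).indicator (fun _ => P A) t ∂volume := by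
            rw [lintegral_indicator measurableSet_Ioo, setLIntegral_const]
        _ ≤ ∫⁻ t, P (Prod.mk t ⁻¹' N) ∂volume := by
            apply lintegral_mono
            intro t
            by_cases h : t ∈ Set.Ioo (1:ℝ) 2
            · rw [Set.indicator_of_mem h]
              exact hineq t h
            · rw [Set.indicator_of_notMem h]
              exact zero_le
    rw [hzero] at hlow
    have hv : volume (Set.Ioo (1:ℝ) 2) = 1 := by
      rw [Real.volume_Ioo]
      norm_num
    rw [hv, mul_one] at hlow
    exact le_antisymm hlow zero_le
  -- conclude
  have hmem1 : MeasurableSet {ω | 1 ∈ H ω} := by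
    have : Measurable (fun ω : Ω => ((1:ℝ), ω)) := measurable_const.prodMk measurable_id
    exact this hgraph
  have hP1 : P {ω | 1 ∈ H ω} = 0 := by
    have hbad : P {ω | ¬ PorousAt (H ω) 1} = 0 := by
      rw [← ae_iff] ; exact hporous
    have hsubset : {ω | 1 ∈ H ω} ⊆ A ∪ {ω | ¬ PorousAt (H ω) 1} := by
      intro ω hω
      by_cases h : PorousAt (H ω) 1
      · exact Or.inl ⟨hω, h⟩
      · exact Or.inr h
    apply le_antisymm _ zero_le
    calc P {ω | 1 ∈ H ω} ≤ P (A ∪ {ω | ¬ PorousAt (H ω) 1}) := measure_mono hsubset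
      _ ≤ P A + P {ω | ¬ PorousAt (H ω) 1} := measure_union_le _ _
      _ = 0 := by rw [hPA, hbad, add_zero]
  have : {ω | 1 ∉ H ω} = {ω | 1 ∈ H ω}ᶜ := rfl
  rw [this, prob_compl_eq_one_iff hmem1]
  exact hP1
end

section
/- Let H ⊆ ℝ and x ∈ ℝ, and let f(x, ε) denote the supremum of the lengths of the intervals contained in (x−ε, x+ε) \ H. Then the lower density of H at x satisfies liminf_{ε→0+} λ*([x−ε, x+ε] ∩ H)/(2ε) ≤ 1 − limsup_{ε→0+} f(x, ε)/(2ε), where λ* denotes Lebesgue outer measure. In particular, if H is porous at x, then liminf_{ε→0+} λ*([x−ε, x+ε] ∩ H)/(2ε) < 1. -/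
open MeasureTheory Filter Topology

lemma gap_zero_mem (H : Set ℝ) (x ε : ℝ) :
    (0 : ℝ) ∈ {l : ℝ | ∃ a b : ℝ, l = b - a ∧ Set.Ioo a b ⊆ Set.Ioo (x - ε) (x + ε) \ H} :=
  ⟨x, x, by ring, by simp⟩

lemma gap_bound (H : Set ℝ) (x : ℝ) {ε : ℝ} (hε : 0 < ε) :
    ∀ l ∈ {l : ℝ | ∃ a b : ℝ, l = b - a ∧ Set.Ioo a b ⊆ Set.Ioo (x - ε) (x + ε) \ H},
      l ≤ 2 * ε := by
  rintro l ⟨a, b, rfl, hsub⟩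
  rcases le_or_gt b a with hba | hab
  · linarith
  · have h2 : Set.Ioo a b ⊆ Set.Ioo (x - ε) (x + ε) := hsub.trans Set.diff_subset
    rw [Set.Ioo_subset_Ioo_iff hab] at h2
    linarith [h2.1, h2.2]

lemma gap_nonneg (H : Set ℝ) (x : ℝ) {ε : ℝ} (hε : 0 < ε) : 0 ≤ gapLength H x ε :=
  le_csSup ⟨2 * ε, gap_bound H x hε⟩ (gap_zero_mem H x ε)

lemma gap_le (H : Set ℝ) (x : ℝ) {ε : ℝ} (hε : 0 < ε) : gapLength H x ε ≤ 2 * ε :=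
  csSup_le ⟨0, gap_zero_mem H x ε⟩ (gap_bound H x hε)

lemma vol_le (H : Set ℝ) (x : ℝ) {ε : ℝ} (hε : 0 < ε) :
    (volume (Set.Icc (x - ε) (x + ε) ∩ H)).toReal ≤ 2 * ε - gapLength H x ε := by
  have key : gapLength H x ε ≤ 2 * ε - (volume (Set.Icc (x - ε) (x + ε) ∩ H)).toReal := by
    apply csSup_le ⟨0, gap_zero_mem H x ε⟩
    rintro l ⟨a, b, rfl, hsub⟩
    have hIccvol : volume (Set.Icc (x - ε) (x + ε)) = ENNReal.ofReal (2 * ε) := by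
      rw [Real.volume_Icc]; ring_nf
    rcases le_or_gt b a with hba | hab
    · have : (volume (Set.Icc (x - ε) (x + ε) ∩ H)).toReal ≤ 2 * ε := by
        have hm : volume (Set.Icc (x - ε) (x + ε) ∩ H) ≤ ENNReal.ofReal (2 * ε) := by
          rw [← hIccvol]; exact measure_mono Set.inter_subset_left
        exact ENNReal.toReal_le_of_le_ofReal (by linarith) hm
      linarith
    · have hIooIcc : Set.Ioo a b ⊆ Set.Icc (x - ε) (x + ε) :=
        (hsub.trans Set.diff_subset).trans Set.Ioo_subset_Icc_self
      have hdisj : Disjoint (Set.Icc (x - ε) (x + ε) ∩ H) (Set.Ioo a b) := by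
        rw [Set.disjoint_right]
        intro y hy hy'
        exact (hsub hy).2 hy'.2
      have hsum : volume (Set.Icc (x - ε) (x + ε) ∩ H) + volume (Set.Ioo a b)
          ≤ ENNReal.ofReal (2 * ε) := by
        rw [← measure_union hdisj measurableSet_Ioo, ← hIccvol]
        exact measure_mono (Set.union_subset Set.inter_subset_left hIooIcc)
      have hab2 : Set.Ioo a b ⊆ Set.Ioo (x - ε) (x + ε) := hsub.trans Set.diff_subset
      have habε : b - a ≤ 2 * ε := by
        rw [Set.Ioo_subset_Ioo_iff hab] at hab2; linarith [hab2.1, hab2.2]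
      have : volume (Set.Icc (x - ε) (x + ε) ∩ H) ≤ ENNReal.ofReal (2 * ε - (b - a)) := by
        rw [ENNReal.ofReal_sub _ (by linarith : (0:ℝ) ≤ b - a)]
        refine ENNReal.le_sub_of_add_le_right (by simp) ?_
        rwa [Real.volume_Ioo] at hsum
      have := ENNReal.toReal_le_of_le_ofReal (by linarith) this
      linarith
  linarith

/-- For `H ⊆ ℝ` and `x ∈ ℝ`, the lower density of `H` at `x` satisfies
`liminf_{ε→0+} λ*([x-ε, x+ε] ∩ H) / (2ε) ≤ 1 - limsup_{ε→0+} gapLength H x ε / (2ε)`,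
where `λ*` is Lebesgue outer measure; in particular, if `H` is porous at `x` then the
lower density of `H` at `x` is `< 1`. -/
theorem lowerDensity_le_of_gapLength (H : Set ℝ) (x : ℝ) :
    (Filter.liminf
        (fun ε => (volume (Set.Icc (x - ε) (x + ε) ∩ H)).toReal / (2 * ε)) (𝓝[>] (0 : ℝ)) ≤
      1 - Filter.limsup (fun ε => gapLength H x ε / (2 * ε)) (𝓝[>] (0 : ℝ))) ∧
    (PorousAt H x →
      Filter.liminf
        (fun ε => (volume (Set.Icc (x - ε) (x + ε) ∩ H)).toReal / (2 * ε)) (𝓝[>] (0 : ℝ)) < 1) := by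
  set F := 𝓝[>] (0 : ℝ)
  set f : ℝ → ℝ := fun ε => (volume (Set.Icc (x - ε) (x + ε) ∩ H)).toReal / (2 * ε) with hf
  set h : ℝ → ℝ := fun ε => gapLength H x ε / (2 * ε) with hh
  have hpos : ∀ᶠ ε in F, 0 < ε := self_mem_nhdsWithin
  have hfnn : ∀ᶠ ε in F, 0 ≤ f ε := hpos.mono fun ε hε => by
    exact div_nonneg ENNReal.toReal_nonneg (by linarith)
  have hh01 : ∀ᶠ ε in F, 0 ≤ h ε ∧ h ε ≤ 1 := hpos.mono fun ε hε => by
    constructor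
    · exact div_nonneg (gap_nonneg H x hε) (by linarith)
    · rw [div_le_one (by linarith)]; exact gap_le H x hε
  have hmain : ∀ᶠ ε in F, f ε ≤ 1 - h ε := hpos.mono fun ε hε => by
    have h1 : f ε ≤ (2 * ε - gapLength H x ε) / (2 * ε) := by
      apply div_le_div_of_nonneg_right (vol_le H x hε)
      linarith
    rw [sub_div, div_self (by linarith : (2:ℝ) * ε ≠ 0)] at h1
    exact h1
  have hbddh_above : F.IsBoundedUnder (· ≤ ·) h := ⟨1, hh01.mono fun ε hε => hε.2⟩
  have hbddh_below : F.IsBoundedUnder (· ≥ ·) h := ⟨0, hh01.mono fun ε hε => hε.1⟩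
  have hcobh_le : F.IsCoboundedUnder (· ≤ ·) h := hbddh_below.isCoboundedUnder_le
  have key : Filter.liminf f F ≤ 1 - Filter.limsup h F := by
    have heq : Filter.liminf (fun ε => 1 - h ε) F = 1 - Filter.limsup h F :=
      liminf_const_sub F h 1 hbddh_above hcobh_le
    rw [← heq]
    refine Filter.liminf_le_liminf hmain ⟨0, hfnn⟩ ?_
    exact (Filter.isBoundedUnder_of_eventually_le (a := (1:ℝ))
      (hh01.mono fun ε hε => by linarith [hε.1])).isCoboundedUnder_ge
  refine ⟨key, fun hpor => ?_⟩
  have hg : (fun ε => gapLength H x ε / ε) = fun ε => h ε * 2 := by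
    funext ε
    rw [hh]
    by_cases hε : ε = 0
    · simp [hε]
    · field_simp
  have hbddg_above : F.IsBoundedUnder (· ≤ ·) (fun ε => gapLength H x ε / ε) := by
    rw [hg]; exact ⟨2, hh01.mono fun ε hε => by simpa using by nlinarith [hε.2]⟩
  have hcobg : F.IsCoboundedUnder (· ≤ ·) (fun ε => gapLength H x ε / ε) := by
    apply Filter.IsBoundedUnder.isCoboundedUnder_le
    rw [hg]; exact ⟨0, hh01.mono fun ε hε => by simpa using by nlinarith [hε.1]⟩
  have hlim : Filter.limsup h F =
      Filter.limsup (fun ε => gapLength H x ε / ε) F / 2 := by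
    have hmono : Monotone (fun y : ℝ => y / 2) := fun a b hab => by linarith
    have := hmono.map_limsup_of_continuousAt (F := F)
      (fun ε => gapLength H x ε / ε) (by fun_prop) hbddg_above hcobg
    have heq2 : ((fun y : ℝ => y / 2) ∘ fun ε => gapLength H x ε / ε) = h := by
      funext ε
      have h2 := congrFun hg ε
      simp only [Function.comp] at h2 ⊢
      rw [h2]; ring
    rw [heq2] at this
    exact this.symm
  have hpos' : 0 < Filter.limsup h F := by
    rw [hlim]; exact div_pos hpor two_pos
  calc Filter.liminf f F ≤ 1 - Filter.limsup h F := key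
    _ < 1 := by linarith
end

section
/- Let (a_k)_{k≥1} be a non-increasing sequence of positive real numbers tending to zero, and for x > 0 let n(x) = inf{k ≥ 1 : a_k < x}. Then liminf_{k→∞} a_{k+1}/a_k = liminf_{x→0+} a_{n(x)}/x. -/
open Filter Topology

/-- Let `(a k)_{k ≥ 1}` be a non-increasing sequence of positive reals
tending to `0`, and for `x > 0` let `n x = inf {k ≥ 1 : a k < x}`. Then
`liminf_{k→∞} a (k+1) / a k = liminf_{x→0+} a (n x) / x`. -/
theorem liminf_ratio_eq_liminf_hitting
    (a : ℕ → ℝ) (hpos : ∀ k, 1 ≤ k → 0 < a k)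
    (hanti : ∀ k, 1 ≤ k → a (k + 1) ≤ a k)
    (hlim : Tendsto a atTop (𝓝 0)) :
    Filter.liminf (fun k => a (k + 1) / a k) atTop =
      Filter.liminf (fun x => a (sInf {k | 1 ≤ k ∧ a k < x}) / x) (𝓝[>] (0 : ℝ)) := by
  set f : ℕ → ℝ := fun k => a (k + 1) / a k with hfdef
  set N : ℝ → ℕ := fun x => sInf {k | 1 ≤ k ∧ a k < x} with hNdef
  set g : ℝ → ℝ := fun x => a (N x) / x with hgdef
  -- monotonicity from index 1
  have hmono : ∀ m k, 1 ≤ m → m ≤ k → a k ≤ a m := by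
    intro m k hm hk
    induction k with
    | zero => omega
    | succ n ih =>
      rcases eq_or_lt_of_le hk with h | h
      · rw [← h]
      · exact (hanti n (by omega)).trans (ih (by omega))
  -- the hitting set is nonempty
  have hne : ∀ x : ℝ, 0 < x → ∃ k, 1 ≤ k ∧ a k < x := by
    intro x hx
    have h := (hlim.eventually (gt_mem_nhds hx)).and (eventually_ge_atTop 1)
    rcases h.exists with ⟨k, h1, h2⟩
    exact ⟨k, h2, h1⟩
  have hNmem : ∀ x : ℝ, 0 < x → 1 ≤ N x ∧ a (N x) < x := fun x hx =>
    Nat.sInf_mem (hne x hx)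
  -- bounds on f
  have hf_pos : ∀ k, 1 ≤ k → 0 < f k := fun k hk =>
    div_pos (hpos (k + 1) (by omega)) (hpos k hk)
  have hf_le1 : ∀ k, 1 ≤ k → f k ≤ 1 := fun k hk =>
    (div_le_one (hpos k hk)).mpr (hanti k hk)
  -- bounds on g
  have hg_pos : ∀ x : ℝ, 0 < x → 0 < g x := fun x hx =>
    div_pos (hpos (N x) (hNmem x hx).1) hx
  have hg_le1 : ∀ x : ℝ, 0 < x → g x ≤ 1 :=
    fun x hx => le_of_lt ((div_lt_one hx).mpr (hNmem x hx).2)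
  have hx_ev : ∀ᶠ x in 𝓝[>] (0 : ℝ), 0 < x := by
    filter_upwards [self_mem_nhdsWithin] with x hx using hx
  -- boundedness facts
  have hfb : atTop.IsBoundedUnder (· ≥ ·) f :=
    isBoundedUnder_of_eventually_ge
      (by filter_upwards [eventually_ge_atTop 1] with k hk using (hf_pos k hk).le)
  have hfcb : atTop.IsCoboundedUnder (· ≥ ·) f :=
    isCoboundedUnder_ge_of_eventually_le atTop
      (x := 1) (by filter_upwards [eventually_ge_atTop 1] with k hk using hf_le1 k hk)
  have hgb : (𝓝[>] (0 : ℝ)).IsBoundedUnder (· ≥ ·) g :=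
    isBoundedUnder_of_eventually_ge
      (by filter_upwards [hx_ev] with x hx using (hg_pos x hx).le)
  have hgcb : (𝓝[>] (0 : ℝ)).IsCoboundedUnder (· ≥ ·) g :=
    isCoboundedUnder_ge_of_eventually_le _
      (x := 1) (by filter_upwards [hx_ev] with x hx using hg_le1 x hx)
  -- N tends to infinity as x → 0+
  have hNtend : Tendsto N (𝓝[>] (0 : ℝ)) atTop := by
    rw [tendsto_atTop]
    intro M
    have haM : 0 < a (M + 1) := hpos (M + 1) (by omega)
    filter_upwards [Ioo_mem_nhdsGT_of_mem ⟨le_refl (0 : ℝ), haM⟩] with x hx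
    by_contra h
    push_neg at h
    have h1 : a (M + 1) ≤ a (N x) := hmono (N x) (M + 1) (hNmem x hx.1).1 (by omega)
    have h2 : a (N x) < x := (hNmem x hx.1).2
    linarith [hx.2]
  have key2 : ∀ k, 1 ≤ k → a (k + 1) < a k → g (a k) = f k := by
    intro k hk hlt
    have hmemS : k + 1 ∈ {m | 1 ≤ m ∧ a m < a k} := ⟨by omega, hlt⟩
    have hNk : N (a k) = k + 1 := by
      refine le_antisymm (Nat.sInf_le hmemS) ?_
      by_contra h
      push_neg at h
      have hm := Nat.sInf_mem (⟨k + 1, hmemS⟩ : Set.Nonempty {m | 1 ≤ m ∧ a m < a k})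
      have : a k ≤ a (N (a k)) := hmono (N (a k)) k hm.1 (by omega)
      exact absurd hm.2 (not_lt.mpr this)
    simp only [hgdef, hNk, hfdef]
  apply le_antisymm
  · -- liminf f ≤ liminf g
    have key : ∀ᶠ x in 𝓝[>] (0 : ℝ), f (N x - 1) ≤ g x := by
      have ha1 : 0 < a 1 := hpos 1 le_rfl
      filter_upwards [Ioo_mem_nhdsGT_of_mem ⟨le_refl (0 : ℝ), ha1⟩] with x hx
      obtain ⟨hx0, hxa1⟩ := hx
      have hN1 : 1 ≤ N x := (hNmem x hx0).1
      have hNx : a (N x) < x := (hNmem x hx0).2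
      have hN2 : 2 ≤ N x := by
        rcases Nat.lt_or_ge (N x) 2 with h | h
        · interval_cases h' : N x <;> simp_all <;> linarith
        · exact h
      set m := N x - 1 with hm
      have hm1 : 1 ≤ m := by omega
      have hmlt : m < N x := by omega
      have hxam : x ≤ a m := by
        have hnotmem : m ∉ {k | 1 ≤ k ∧ a k < x} := Nat.notMem_of_lt_sInf hmlt
        simp only [Set.mem_setOf_eq, not_and, not_lt] at hnotmem
        exact hnotmem hm1
      have hmsucc : m + 1 = N x := by omega
      have : f m = a (N x) / a m := by rw [hfdef]; simp only [hmsucc]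
      rw [this]
      have haN : 0 ≤ a (N x) := (hpos (N x) hN1).le
      exact div_le_div_of_nonneg_left haN hx0 hxam |>.trans_eq rfl
    calc liminf f atTop ≤ liminf (fun x => f (N x - 1)) (𝓝[>] (0 : ℝ)) := by
          rw [show (fun x => f (N x - 1)) = f ∘ (fun x => N x - 1) from rfl, liminf_comp]
          refine liminf_le_liminf_of_le ?_ hfb ?_
          · show Tendsto (fun x => N x - 1) (𝓝[>] (0 : ℝ)) atTop
            rw [tendsto_atTop]
            intro M
            filter_upwards [hNtend.eventually (eventually_ge_atTop (M + 1))] with x hx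
            omega
          · exact isCoboundedUnder_ge_of_eventually_le _ (x := 1) (by
              rw [eventually_map]
              filter_upwards [hNtend.eventually (eventually_ge_atTop 2)] with x hx
              exact hf_le1 _ (by omega))
      _ ≤ liminf g (𝓝[>] (0 : ℝ)) := by
          refine liminf_le_liminf key ?_ hgcb
          exact isBoundedUnder_of_eventually_ge (by
            filter_upwards [hNtend.eventually (eventually_ge_atTop 2)] with x hx
            exact (hf_pos _ (by omega)).le)
  · -- liminf g ≤ liminf f
    refine le_of_forall_gt_imp_ge_of_dense ?_
    intro c hc
    rcases le_or_gt 1 c with h1c | h1c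
    · refine le_trans ?_ h1c
      exact liminf_le_of_frequently_le
        ((by filter_upwards [hx_ev] with x hx using hg_le1 x hx :
          ∀ᶠ x in 𝓝[>] (0 : ℝ), g x ≤ 1).frequently) hgb
    · have hfreq : ∃ᶠ k in atTop, f k < c := frequently_lt_of_liminf_lt hfcb hc
      have hfr : ∃ᶠ x in 𝓝[>] (0 : ℝ), g x ≤ c := by
        rw [frequently_iff]
        intro U hU
        obtain ⟨δ, hδ0, hδ⟩ := mem_nhdsGT_iff_exists_Ioo_subset.1 hU
        have hev : ∀ᶠ k in atTop, 1 ≤ k ∧ a k < δ :=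
          (eventually_ge_atTop 1).and (hlim.eventually (gt_mem_nhds hδ0))
        obtain ⟨k, ⟨hk1, hkδ⟩, hkc⟩ := (hev.and_frequently hfreq).exists
        have hlt : a (k + 1) < a k := by
          have := (div_lt_one (hpos k hk1)).mp (lt_trans hkc h1c)
          exact this
        refine ⟨a k, hδ ⟨hpos k hk1, hkδ⟩, ?_⟩
        rw [key2 k hk1 hlt]
        exact hkc.le
      exact liminf_le_of_frequently_le hfr hgb
end

section
/- Let (η_n)_{n≥0} be a sequence of real-valued random variables on a probability space (Ω, F, P) with inf_{n≥0} |η_n| = 0 almost surely. For n ≥ 1 define Z_n = min_{0≤k<n} |η_k|, and for x > 0 define ν(x) = inf{n ≥ 0 : |η_n| < x} (which is finite almost surely for every x > 0). Then the family {x·ν(x) : x ∈ (0,1)} is tight if and only if the family {n·Z_n : n ≥ 1} is tight. -/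
open MeasureTheory Filter Topology

/-- A family `(ξ i)_{i ∈ I}` of real random variables is tight if
`sup_i P (|ξ i| > K) → 0` as `K → ∞`. -/
def IsTightFamily {Ω : Type*} [MeasurableSpace Ω] (P : Measure Ω)
    {I : Type*} (ξ : I → Ω → ℝ) : Prop :=
  Tendsto (fun K : ℝ => ⨆ i, P {ω | K < |ξ i ω|}) atTop (𝓝 0)

/-- `runMin η n ω = min_{0 ≤ k < n} |η k ω|`. -/
noncomputable def runMin {Ω : Type*} (η : ℕ → Ω → ℝ) (n : ℕ) (ω : Ω) : ℝ :=
  sInf ((fun k => |η k ω|) '' Set.Iio n)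

/-- `hitTime η x ω = inf {n ≥ 0 : |η n ω| < x}`. -/
noncomputable def hitTime {Ω : Type*} (η : ℕ → Ω → ℝ) (x : ℝ) (ω : Ω) : ℕ :=
  sInf {n | |η n ω| < x}

lemma runMin_nonneg {Ω : Type*} (η : ℕ → Ω → ℝ) {n : ℕ} (hn : 0 < n) (ω : Ω) :
    0 ≤ runMin η n ω := by
  have hne : ((fun k => |η k ω|) '' Set.Iio n).Nonempty := ⟨|η 0 ω|, ⟨0, hn, rfl⟩⟩
  apply le_csInf hne
  rintro b ⟨k, -, rfl⟩; exact abs_nonneg _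

lemma runMin_le {Ω : Type*} (η : ℕ → Ω → ℝ) {k n : ℕ} (hk : k < n) (ω : Ω) :
    runMin η n ω ≤ |η k ω| := by
  apply csInf_le ((Set.finite_Iio n).image _).bddBelow
  exact ⟨k, hk, rfl⟩

lemma le_runMin {Ω : Type*} (η : ℕ → Ω → ℝ) {n : ℕ} (hn : 0 < n) {x : ℝ} (ω : Ω)
    (h : ∀ k < n, x ≤ |η k ω|) : x ≤ runMin η n ω := by
  have hne : ((fun k => |η k ω|) '' Set.Iio n).Nonempty := ⟨|η 0 ω|, ⟨0, hn, rfl⟩⟩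
  apply le_csInf hne
  rintro b ⟨k, hk, rfl⟩; exact h k hk

lemma le_hitTime {Ω : Type*} (η : ℕ → Ω → ℝ) {x : ℝ} {n : ℕ} (ω : Ω)
    (hne : ∃ m, |η m ω| < x) (h : ∀ m < n, x ≤ |η m ω|) : n ≤ hitTime η x ω := by
  by_contra hc
  push_neg at hc
  have hmem : hitTime η x ω ∈ {m | |η m ω| < x} := Nat.sInf_mem hne
  exact absurd hmem (not_lt.2 (h _ hc))

lemma hitTime_spec {Ω : Type*} (η : ℕ → Ω → ℝ) {x : ℝ} {n m : ℕ} (ω : Ω)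
    (h : n ≤ hitTime η x ω) (hm : m < n) : x ≤ |η m ω| := by
  by_contra hc
  push_neg at hc
  have := Nat.sInf_le (show m ∈ {m | |η m ω| < x} from hc)
  have : hitTime η x ω ≤ m := this
  omega

lemma tendsto_tail_zero {Ω : Type*} [MeasurableSpace Ω] (P : Measure Ω)
    [IsProbabilityMeasure P] (f : Ω → ℝ) (hf : Measurable f) :
    Tendsto (fun K : ℝ => P {ω | K < |f ω|}) atTop (𝓝 0) := by
  have hanti : Antitone (fun K : ℝ => P {ω | K < |f ω|}) := by
    intro a b hab
    exact measure_mono (fun ω hω => lt_of_le_of_lt hab hω)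
  have h1 := tendsto_atTop_iInf hanti
  have hantiN : Antitone (fun n : ℕ => P {ω | (n : ℝ) < |f ω|}) := by
    intro a b hab
    refine measure_mono (fun ω hω => ?_)
    simp only [Set.mem_setOf_eq] at hω ⊢
    exact lt_of_le_of_lt (by exact_mod_cast hab) hω
  have hseq : Tendsto (fun n : ℕ => P {ω | (n : ℝ) < |f ω|}) atTop
      (𝓝 (P (⋂ n : ℕ, {ω | (n : ℝ) < |f ω|}))) := by
    have := MeasureTheory.tendsto_measure_iInter_atTop
      (μ := P) (s := fun n : ℕ => {ω | (n : ℝ) < |f ω|})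
      (fun n => (measurableSet_lt measurable_const hf.abs).nullMeasurableSet)
      (fun a b hab => (fun ω hω => by
        simp only [Set.mem_setOf_eq] at hω ⊢
        exact lt_of_le_of_lt (by exact_mod_cast hab) hω))
      ⟨0, measure_ne_top P _⟩
    exact this
  have hempty : (⋂ n : ℕ, {ω : Ω | (n : ℝ) < |f ω|}) = ∅ := by
    ext ω
    simp only [Set.mem_iInter, Set.mem_setOf_eq, Set.mem_empty_iff_false, iff_false, not_forall,
      not_lt]
    obtain ⟨n, hn⟩ := exists_nat_gt |f ω|
    exact ⟨n, hn.le⟩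
  rw [hempty, measure_empty] at hseq
  have hNinf : (⨅ n : ℕ, P {ω | (n : ℝ) < |f ω|}) = 0 :=
    tendsto_nhds_unique (tendsto_atTop_iInf hantiN) hseq
  have hRinf : (⨅ K : ℝ, P {ω | K < |f ω|}) = 0 := by
    refine le_antisymm ?_ (zero_le)
    rw [← hNinf]
    exact le_iInf fun n => iInf_le _ (n : ℝ)
  rwa [hRinf] at h1

/-- Let `(η n)` be real random variables with `inf_n |η n| = 0` a.s.;
let `Z n = min_{k < n} |η k|` (for `n ≥ 1`) and `ν x = inf {n : |η n| < x}` (for `x > 0`).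
Then the family `{x • ν x : x ∈ (0,1)}` is tight iff the family `{n • Z n : n ≥ 1}` is. -/
theorem tight_hitTime_iff_tight_runMin
    {Ω : Type*} [MeasurableSpace Ω] (P : Measure Ω) [IsProbabilityMeasure P]
    (η : ℕ → Ω → ℝ) (hmeas : ∀ n, Measurable (η n))
    (hinf : ∀ᵐ ω ∂P, ⨅ n, |η n ω| = 0) :
    IsTightFamily P (fun x : Set.Ioo (0 : ℝ) 1 =>
        fun ω => (x : ℝ) * (hitTime η (x : ℝ) ω : ℝ)) ↔
      IsTightFamily P (fun n : {n : ℕ // 1 ≤ n} =>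
        fun ω => ((n : ℕ) : ℝ) * runMin η (n : ℕ) ω) := by
  unfold IsTightFamily
  constructor
  · -- forward: tight {x ν(x)} → tight {n Z_n}
    intro h
    have hη0 := tendsto_tail_zero P (η 0) (hmeas 0)
    rw [ENNReal.tendsto_nhds_zero] at h hη0 ⊢
    intro ε hε
    obtain ⟨A, ⟨hAx, hA0⟩, hA1⟩ :=
      (((h ε hε).and (hη0 ε hε)).and (eventually_ge_atTop (1 : ℝ))).exists
    have hApos : (0 : ℝ) < A := lt_of_lt_of_le one_pos hA1
    filter_upwards [eventually_ge_atTop (4 * A * A)] with K hK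
    have hKpos : (0 : ℝ) < K := lt_of_lt_of_le (by positivity) hK
    apply iSup_le
    rintro ⟨n, hn⟩
    simp only
    have hn0 : 0 < n := hn
    have hnR : (0 : ℝ) < n := by exact_mod_cast hn0
    by_cases hcase : (n : ℝ) ≤ 2 * A
    · -- small n: event forces |η 0| large
      refine le_trans (measure_mono ?_) hA0
      intro ω hω
      simp only [Set.mem_setOf_eq] at hω ⊢
      rw [abs_of_nonneg (mul_nonneg hnR.le (runMin_nonneg η hn0 ω))] at hω
      have h1 : runMin η n ω ≤ |η 0 ω| := runMin_le η hn0 ω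
      have p1 : (n : ℝ) * runMin η n ω ≤ (n : ℝ) * |η 0 ω| :=
        mul_le_mul_of_nonneg_left h1 hnR.le
      have p2 : (n : ℝ) * |η 0 ω| ≤ 2 * A * |η 0 ω| :=
        mul_le_mul_of_nonneg_right hcase (abs_nonneg _)
      have h2A : 2 * A * (2 * A) < 2 * A * |η 0 ω| := by nlinarith
      have h3 : 2 * A < |η 0 ω| := lt_of_mul_lt_mul_left h2A (by linarith)
      linarith
    · -- large n: event forces x ν(x) large for x = min (K/n) (1/2)
      push_neg at hcase
      set x : ℝ := min (K / n) (1 / 2) with hxdef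
      have hx0 : 0 < x := lt_min (div_pos hKpos hnR) (by norm_num)
      have hx1 : x < 1 := lt_of_le_of_lt (min_le_right _ _) (by norm_num)
      have step : P {ω | K < |(n : ℝ) * runMin η n ω|}
          ≤ P {ω | A < |x * (hitTime η x ω : ℝ)|} := by
        apply measure_mono_ae
        filter_upwards [hinf] with ω hωinf hω
        replace hω : K < |(n : ℝ) * runMin η n ω| := hω
        show A < |x * (hitTime η x ω : ℝ)|
        rw [abs_of_nonneg (mul_nonneg hnR.le (runMin_nonneg η hn0 ω))] at hω
        have hZ : K / n < runMin η n ω := by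
          rw [div_lt_iff₀ hnR]
          linarith [hω]
        have hxZ : x ≤ runMin η n ω := le_of_lt (lt_of_le_of_lt (min_le_left _ _) hZ)
        have hall : ∀ m < n, x ≤ |η m ω| := fun m hm => le_trans hxZ (runMin_le η hm ω)
        have hne : ∃ m, |η m ω| < x := exists_lt_of_ciInf_lt (by rw [hωinf]; exact hx0)
        have hnu : n ≤ hitTime η x ω := le_hitTime η ω hne hall
        have hnuR : (n : ℝ) ≤ (hitTime η x ω : ℝ) := by exact_mod_cast hnu
        rw [abs_of_nonneg (mul_nonneg hx0.le (Nat.cast_nonneg _))]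
        have hxn : A < x * (n : ℝ) := by
          rcases min_cases (K / (n : ℝ)) (1 / 2) with ⟨hmin, -⟩ | ⟨hmin, -⟩
          · rw [hxdef, hmin, div_mul_cancel₀ K hnR.ne']
            nlinarith
          · rw [hxdef, hmin]
            linarith
        exact lt_of_lt_of_le hxn (mul_le_mul_of_nonneg_left hnuR hx0.le)
      refine le_trans step (le_trans ?_ hAx)
      exact le_iSup (fun i : Set.Ioo (0 : ℝ) 1 =>
        P {ω | A < |(i : ℝ) * (hitTime η (i : ℝ) ω : ℝ)|}) ⟨x, hx0, hx1⟩
  · -- reverse: tight {n Z_n} → tight {x ν(x)}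
    intro h
    refine tendsto_of_tendsto_of_tendsto_of_le_of_le' tendsto_const_nhds h
      (Eventually.of_forall fun K => zero_le) ?_
    filter_upwards [eventually_ge_atTop (0 : ℝ)] with K hK
    apply iSup_le
    rintro ⟨x, hx0, hx1⟩
    simp only
    set n : ℕ := ⌊K / x⌋₊ + 1 with hndef
    have hn1 : 1 ≤ n := Nat.le_add_left 1 _
    have hn0 : 0 < n := hn1
    have step : P {ω | K < |x * (hitTime η x ω : ℝ)|}
        ≤ P {ω | K < |(n : ℝ) * runMin η n ω|} := by
      apply measure_mono
      intro ω hω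
      simp only [Set.mem_setOf_eq] at hω ⊢
      rw [abs_of_nonneg (mul_nonneg hx0.le (Nat.cast_nonneg _))] at hω
      have hdiv : K / x < (hitTime η x ω : ℝ) := by
        rw [div_lt_iff₀ hx0]
        linarith [hω]
      have hfl : ⌊K / x⌋₊ < hitTime η x ω := (Nat.floor_lt (div_nonneg hK hx0.le)).2 hdiv
      have hnn : n ≤ hitTime η x ω := hfl
      have hall : ∀ m < n, x ≤ |η m ω| := fun m hm => hitTime_spec η ω hnn hm
      have hZ : x ≤ runMin η n ω := le_runMin η hn0 ω hall
      have hZ0 : 0 ≤ runMin η n ω := le_trans hx0.le hZ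
      rw [abs_of_nonneg (mul_nonneg (Nat.cast_nonneg _) hZ0)]
      have hKn : K < (n : ℝ) * x := by
        have h1 : K / x < (n : ℝ) := by
          rw [hndef]
          push_cast
          exact Nat.lt_floor_add_one (K / x)
        calc K = K / x * x := by field_simp
          _ < (n : ℝ) * x := by exact mul_lt_mul_of_pos_right h1 hx0
      calc K < (n : ℝ) * x := hKn
        _ ≤ (n : ℝ) * runMin η n ω := mul_le_mul_of_nonneg_left hZ (Nat.cast_nonneg _)
    refine le_trans step ?_
    exact le_iSup (fun i : {n : ℕ // 1 ≤ n} =>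
      P {ω | K < |((i : ℕ) : ℝ) * runMin η (i : ℕ) ω|}) ⟨n, hn1⟩
end

section
/- Let (η_n)_{n≥0} be a sequence of real-valued random variables on a probability space (Ω, F, P) with inf_{n≥0} |η_n| = 0 almost surely. For n ≥ 1 define Z_n = min_{0≤k<n} |η_k|, and for x > 0 define ν(x) = inf{n ≥ 0 : |η_n| < x} (finite almost surely for every x > 0). Then for every K > 0: limsup_{x→0+} P(x·ν(x) > 2K) ≤ limsup_{n→∞} P(n·Z_n ≥ K) ≤ limsup_{x→0+} P(x·ν(x) ≥ K). -/
open MeasureTheory Filter Topology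

private lemma runMin_ge_iff {Ω : Type*} (η : ℕ → Ω → ℝ) (ω : Ω) {x : ℝ} {n : ℕ}
    (hn : 0 < n) : x ≤ runMin η n ω ↔ ∀ k < n, x ≤ |η k ω| := by
  unfold runMin
  constructor
  · intro h k hk
    refine h.trans (csInf_le ?_ ?_)
    · exact ⟨0, by rintro y ⟨m, _, rfl⟩; positivity⟩
    · exact ⟨k, hk, rfl⟩
  · intro h
    apply le_csInf
    · exact ⟨|η 0 ω|, 0, hn, rfl⟩
    · rintro y ⟨m, hm, rfl⟩; exact h m hm

private lemma forall_of_le_hitTime {Ω : Type*} {η : ℕ → Ω → ℝ} {ω : Ω} {x : ℝ} {n : ℕ}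
    (h : n ≤ hitTime η x ω) : ∀ k < n, x ≤ |η k ω| := by
  intro k hk
  by_contra hx
  push_neg at hx
  exact absurd (Nat.sInf_le hx) (not_le.2 (hk.trans_le h))

private lemma le_hitTime_iff {Ω : Type*} {η : ℕ → Ω → ℝ} {ω : Ω} {x : ℝ} {n : ℕ}
    (hne : {m | |η m ω| < x}.Nonempty) :
    n ≤ hitTime η x ω ↔ ∀ k < n, x ≤ |η k ω| := by
  constructor
  · exact forall_of_le_hitTime
  · intro h
    by_contra hlt
    push_neg at hlt
    exact absurd (Nat.sInf_mem hne) (not_lt.2 (h _ hlt))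

set_option maxHeartbeats 2000000 in
/-- Let `(η n)` be real random variables with `inf_n |η n| = 0` a.s.;
let `Z n = min_{k < n} |η k|` (for `n ≥ 1`) and `ν x = inf {n : |η n| < x}` (for `x > 0`).
Then for every `K > 0`:
`limsup_{x→0+} P (x ν(x) > 2K) ≤ limsup_{n→∞} P (n Z_n ≥ K) ≤ limsup_{x→0+} P (x ν(x) ≥ K)`. -/
theorem limsup_prob_hitTime_runMin
    {Ω : Type*} [MeasurableSpace Ω] (P : Measure Ω) [IsProbabilityMeasure P]
    (η : ℕ → Ω → ℝ) (hmeas : ∀ n, Measurable (η n))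
    (hinf : ∀ᵐ ω ∂P, ⨅ n, |η n ω| = 0)
    (K : ℝ) (hK : 0 < K) :
    Filter.limsup (fun x : ℝ => P {ω | 2 * K < x * (hitTime η x ω : ℝ)}) (𝓝[>] (0 : ℝ)) ≤
        Filter.limsup (fun n : ℕ => P {ω | K ≤ (n : ℝ) * runMin η n ω}) atTop ∧
      Filter.limsup (fun n : ℕ => P {ω | K ≤ (n : ℝ) * runMin η n ω}) atTop ≤
        Filter.limsup (fun x : ℝ => P {ω | K ≤ x * (hitTime η x ω : ℝ)}) (𝓝[>] (0 : ℝ)) := by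
  set u : ℕ → ENNReal := fun n => P {ω | K ≤ (n : ℝ) * runMin η n ω} with hu
  -- a.e. nonemptiness of the hitting set
  have hne : ∀ x : ℝ, 0 < x → ∀ᵐ ω ∂P, {m | |η m ω| < x}.Nonempty := by
    intro x hx
    filter_upwards [hinf] with ω hω
    by_contra hemp
    push_neg at hemp
    simp only [Set.not_nonempty_iff_eq_empty, Set.eq_empty_iff_forall_notMem,
      Set.mem_setOf_eq, not_lt] at hemp
    have : x ≤ ⨅ n, |η n ω| := le_ciInf hemp
    rw [hω] at this
    exact absurd this (not_le.2 hx)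
  constructor
  · -- first inequality
    set g : ℝ → ℕ := fun x => ⌊2 * K / x⌋₊ + 1 with hg
    have hincl : ∀ x : ℝ, 0 < x →
        P {ω | 2 * K < x * (hitTime η x ω : ℝ)} ≤ u (g x) := by
      intro x hx
      apply measure_mono
      intro ω hω
      simp only [Set.mem_setOf_eq] at hω ⊢
      have hfloor : (2 * K / x : ℝ) < (g x : ℕ) := Nat.lt_floor_add_one _ |>.trans_le (by
        push_cast [hg]; rfl) |>.trans_le le_rfl
      -- g x ≤ hitTime
      have hle : g x ≤ hitTime η x ω := by
        have h1 : 2 * K / x < (hitTime η x ω : ℝ) := by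
          rw [div_lt_iff₀ hx]
          linarith [hω]
        have h2 : ⌊2 * K / x⌋₊ < hitTime η x ω := by
          rw [Nat.floor_lt (by positivity)]
          exact h1
        exact h2
      have hZ : x ≤ runMin η (g x) ω :=
        (runMin_ge_iff η ω (Nat.succ_pos _)).2 (forall_of_le_hitTime hle)
      have hgx : 2 * K < (g x : ℝ) * x := by
        have := Nat.lt_floor_add_one (2 * K / x)
        rw [div_lt_iff₀ hx] at this
        push_cast [hg]
        linarith
      have : 2 * K ≤ (g x : ℝ) * runMin η (g x) ω :=
        hgx.le.trans (mul_le_mul_of_nonneg_left hZ (by positivity))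
      linarith
    calc Filter.limsup (fun x : ℝ => P {ω | 2 * K < x * (hitTime η x ω : ℝ)}) (𝓝[>] (0 : ℝ))
        ≤ Filter.limsup (fun x : ℝ => u (g x)) (𝓝[>] (0 : ℝ)) := by
          refine Filter.limsup_le_limsup ?_
          filter_upwards [self_mem_nhdsWithin] with x hx
          exact hincl x hx
      _ = Filter.limsup u (Filter.map g (𝓝[>] (0 : ℝ))) :=
          (Filter.limsup_comp u g (𝓝[>] (0 : ℝ))).symm
      _ ≤ Filter.limsup u atTop := by
          have h2K : (0:ℝ) < 2 * K := by linarith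
          have hdiv : Filter.Tendsto (fun x : ℝ => 2 * K / x) (𝓝[>] (0:ℝ)) atTop := by
            have : Filter.Tendsto (fun x : ℝ => 2 * K * x⁻¹) (𝓝[>] (0:ℝ)) atTop :=
              Filter.Tendsto.const_mul_atTop h2K tendsto_inv_nhdsGT_zero
            simpa [div_eq_mul_inv] using this
          have hfl : Filter.Tendsto (fun x : ℝ => ⌊2 * K / x⌋₊) (𝓝[>] (0:ℝ)) atTop :=
            tendsto_nat_floor_atTop.comp hdiv
          have htend : Filter.Tendsto g (𝓝[>] (0 : ℝ)) atTop := by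
            rw [hg]
            exact (tendsto_add_atTop_nat 1).comp hfl
          exact Filter.limsup_le_limsup_of_le htend
  · -- second inequality
    set v : ℝ → ENNReal := fun x => P {ω | K ≤ x * (hitTime η x ω : ℝ)} with hv
    have heq : ∀ n : ℕ, 0 < n → u n = v (K / n) := by
      intro n hn
      have hx : (0:ℝ) < K / n := by positivity
      apply measure_congr
      apply Filter.eventuallyEq_set.2
      filter_upwards [hne (K / n) hx] with ω hω
      show (K ≤ (n : ℝ) * runMin η n ω) ↔ (K ≤ K / n * (hitTime η (K / n) ω : ℝ))
      have hcast : (0:ℝ) < (n:ℝ) := by exact_mod_cast hn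
      constructor
      · intro h
        have hZ : K / n ≤ runMin η n ω := by
          rw [div_le_iff₀ hcast]; linarith [mul_comm (n:ℝ) (runMin η n ω)]
        have hle : n ≤ hitTime η (K / n) ω :=
          (le_hitTime_iff hω).2 ((runMin_ge_iff η ω hn).1 hZ)
        have : (n:ℝ) ≤ (hitTime η (K / n) ω : ℝ) := by exact_mod_cast hle
        calc K = K / n * n := by field_simp
          _ ≤ K / n * (hitTime η (K / n) ω : ℝ) :=
            mul_le_mul_of_nonneg_left this hx.le
      · intro h
        have hle : n ≤ hitTime η (K / n) ω := by
          by_contra hlt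
          push_neg at hlt
          have h1 : (hitTime η (K / n) ω : ℝ) < (n : ℝ) := by exact_mod_cast hlt
          have h2 : K / n * (hitTime η (K / n) ω : ℝ) < K / n * n :=
            mul_lt_mul_of_pos_left h1 hx
          rw [div_mul_cancel₀ _ (ne_of_gt hcast)] at h2
          linarith
        have hZ : K / n ≤ runMin η n ω :=
          (runMin_ge_iff η ω hn).2 (forall_of_le_hitTime hle)
        rw [div_le_iff₀ hcast] at hZ
        linarith [mul_comm (runMin η n ω) (n:ℝ)]
    calc Filter.limsup u atTop
        = Filter.limsup (fun n : ℕ => v (K / n)) atTop := by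
          apply Filter.limsup_congr
          filter_upwards [Filter.eventually_gt_atTop 0] with n hn
          exact heq n hn
      _ = Filter.limsup v (Filter.map (fun n : ℕ => K / (n:ℝ)) atTop) :=
          (Filter.limsup_comp v (fun n : ℕ => K / (n:ℝ)) atTop).symm
      _ ≤ Filter.limsup v (𝓝[>] (0 : ℝ)) := by
          have htend : Filter.Tendsto (fun n : ℕ => K / (n:ℝ)) atTop (𝓝[>] (0:ℝ)) := by
            apply tendsto_nhdsWithin_of_tendsto_nhds_of_eventually_within
            · exact tendsto_const_div_atTop_nhds_zero_nat K
            · filter_upwards [Filter.eventually_gt_atTop 0] with n hn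
              have : (0:ℝ) < (n:ℝ) := by exact_mod_cast hn
              exact div_pos hK this
          exact Filter.limsup_le_limsup_of_le htend
end
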